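/- arXiv:2506.06109 — 6 statements merged into one kernel-verified Lean document; each statement's English description precedes it below -/
import Mathlib

section
/- Let M be a finite matroid and let x, y ∈ E(M) satisfy: both Z_x ∖ Z_y and Z_y ∖ Z_x are nonempty, and for every X ∈ Z_x ∖ Z_y and Y ∈ Z_y ∖ Z_x the pair (X, Y) is not modular (where Z_e = {F ∈ Z(M) : e ∈ F}). Let M' be the matroid on E(M) whose cyclic flats are (Z(M) ∖ (Z_y ∖ Z_x)) ∪ {(Y ∖ {y}) ∪ {x} : Y ∈ Z_y ∖ Z_x}, with r_{M'}(F) = r_M(F) for F ∈ Z(M) ∖ (Z_y ∖ Z_x) and r_{M'}((Y ∖ {y}) ∪ {x}) = r_M(Y), and let M'' be the matroid obtained from the same construction with the roles of x and y interchanged. Then the transposition of E(M) that exchanges x and y and fixes all other elements is an isomorphism of M' onto M''. -/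
open Set Matroid

namespace Paper

variable {α : Type*} {β : Type*}

/-- The rank of a set in a matroid: the largest cardinality of an independent subset. -/
noncomputable def rnk (M : Matroid α) (X : Set α) : ℕ :=
  sSup {n | ∃ I, M.Indep I ∧ I ⊆ X ∧ I.ncard = n}

/-- A coloop: an element contained in every base. -/
def IsColoop (M : Matroid α) (e : α) : Prop := ∀ B, M.IsBase B → e ∈ B

/-- A cyclic flat: a flat whose restriction has no coloops. -/
def CyclicFlat (M : Matroid α) (F : Set α) : Prop :=
  M.IsFlat F ∧ ∀ e ∈ F, ¬ IsColoop (M ↾ F) e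

/-- A modular pair of sets. -/
def ModularPair (M : Matroid α) (X Y : Set α) : Prop :=
  rnk M X + rnk M Y = rnk M (X ∪ Y) + rnk M (X ∩ Y)

/-- Two matroids have the same configuration: there is an inclusion-order isomorphism
between their collections of cyclic flats preserving size and rank. -/
def SameConfig (M : Matroid α) (N : Matroid β) : Prop :=
  ∃ φ : {F : Set α // CyclicFlat M F} ≃o {F : Set β // CyclicFlat N F},
    ∀ F : {F : Set α // CyclicFlat M F},
      (φ F : Set β).ncard = (F : Set α).ncard ∧ rnk N (φ F : Set β) = rnk M (F : Set α)

/-- Matroid isomorphism: a bijection between ground sets mapping independent sets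
onto independent sets. -/
def IsIso (M : Matroid α) (N : Matroid β) : Prop :=
  ∃ f : α → β, Set.BijOn f M.E N.E ∧ ∀ I ⊆ M.E, (M.Indep I ↔ N.Indep (f '' I))

/-- A matroid is configuration unique if every (finite) matroid with the same
configuration is isomorphic to it. -/
def ConfigUnique (M : Matroid α) : Prop :=
  ∀ {γ : Type*} (N : Matroid γ), N.Finite → SameConfig M N → IsIso M N

/-- A circuit: a minimal dependent set. -/
def IsCircuit (M : Matroid α) (C : Set α) : Prop :=
  C ⊆ M.E ∧ ¬ M.Indep C ∧ ∀ x ∈ C, M.Indep (C \ {x})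

/-- A matroid is connected if its ground set is nonempty and any two distinct
elements lie in a common circuit. -/
def MatConnected (M : Matroid α) : Prop :=
  M.E.Nonempty ∧ ∀ ⦃e f⦄, e ∈ M.E → f ∈ M.E → e ≠ f → ∃ C, IsCircuit M C ∧ e ∈ C ∧ f ∈ C

/-- The connected component of `e`: all elements sharing a circuit with `e` (plus `e`). -/
def component (M : Matroid α) (e : α) : Set α :=
  {f ∈ M.E | e = f ∨ ∃ C, IsCircuit M C ∧ e ∈ C ∧ f ∈ C}

/-- `(A 1, …, A r)` is a presentation of the transversal matroid `M`: the independent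
sets of `M` are exactly the partial transversals. -/
def IsPresentation (M : Matroid α) (r : ℕ) (A : ℕ → Set α) : Prop :=
  (∀ i ∈ Set.Icc 1 r, A i ⊆ M.E) ∧
  ∀ I : Set α, M.Indep I ↔ I ⊆ M.E ∧ ∃ φ : α → ℕ, Set.InjOn φ I ∧
    ∀ x ∈ I, φ x ∈ Set.Icc 1 r ∧ x ∈ A (φ x)

/-- A transversal matroid. -/
def IsTransversalMatroid (M : Matroid α) : Prop := ∃ r A, IsPresentation M r A

/-- A fundamental (principal) transversal matroid: one with a presentation in which each
set has an element belonging to no other set. -/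
def IsFundamental (M : Matroid α) : Prop :=
  ∃ (r : ℕ) (A : ℕ → Set α), IsPresentation M r A ∧
    ∀ i ∈ Set.Icc 1 r, ∃ e ∈ A i, ∀ j ∈ Set.Icc 1 r, j ≠ i → e ∉ A j

/-- `M` is the lattice path matroid `M[P,Q]` on `[n]` determined by the positions
`l 1 < ⋯ < l r` of the north steps of the upper path and `u 1 < ⋯ < u r` of those of the
lower path: the transversal matroid on `[n]` presented by the intervals `N i = [l i, u i]`. -/
def IsLPM (n r : ℕ) (l u : ℕ → ℕ) (M : Matroid ℕ) : Prop :=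
  1 ≤ r ∧ r ≤ n ∧
  StrictMonoOn l (Set.Icc 1 r) ∧ StrictMonoOn u (Set.Icc 1 r) ∧
  (∀ i ∈ Set.Icc 1 r, l i ∈ Set.Icc 1 n ∧ u i ∈ Set.Icc 1 n ∧ l i ≤ u i) ∧
  M.E = Set.Icc 1 n ∧
  IsPresentation M r (fun i => Set.Icc (l i) (u i))

/-- A lattice path matroid: any matroid isomorphic to some `M[P,Q]`. -/
def IsLatticePathMatroid (M : Matroid α) : Prop :=
  ∃ (n r : ℕ) (l u : ℕ → ℕ) (M₀ : Matroid ℕ), IsLPM n r l u M₀ ∧ IsIso M₀ M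

/-- `[a] = {1, …, a}` is an initial connected flat: `a ∉ {l 1, …, l r}` and
`a + 1 ∈ {l 1, …, l r}`. -/
def InitialFlat (r : ℕ) (l : ℕ → ℕ) (a : ℕ) : Prop :=
  (∀ i ∈ Set.Icc 1 r, l i ≠ a) ∧ ∃ i ∈ Set.Icc 1 r, l i = a + 1

/-- `[b, n]` is a final connected flat: `b - 1 ∈ {u 1, …, u r}` and
`b ∉ {u 1, …, u r}`. -/
def FinalFlat (r : ℕ) (u : ℕ → ℕ) (b : ℕ) : Prop :=
  (∃ i ∈ Set.Icc 1 r, u i = b - 1) ∧ ∀ i ∈ Set.Icc 1 r, u i ≠ b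

/-- The pair `([a], [b,n])` is mixed: `a₁ < b₁` and `a₂ > b₂`, where
`a₂ = #{i : l i ≤ a}`, `a₁ = a - a₂`, `b₂ = #{i : u i ≤ b-1}`, `b₁ = b - 1 - b₂`. -/
def Mixed (r : ℕ) (l u : ℕ → ℕ) (a b : ℕ) : Prop :=
  a - {i ∈ Set.Icc 1 r | l i ≤ a}.ncard
      < (b - 1) - {i ∈ Set.Icc 1 r | u i ≤ b - 1}.ncard ∧
  {i ∈ Set.Icc 1 r | u i ≤ b - 1}.ncard < {i ∈ Set.Icc 1 r | l i ≤ a}.ncard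

/-- A set of integers is an interval (order-convex set). -/
def IsInterval (S : Set ℕ) : Prop :=
  ∀ x ∈ S, ∀ y ∈ S, ∀ z, x ≤ z → z ≤ y → z ∈ S

/-- `R` is the rook matroid `R[P,Q]` on `[n]`: the transversal matroid presented by
`A i = {i} ∪ {r + j : l i - i + 1 ≤ j ≤ u i - i}`. -/
def IsRook (n r : ℕ) (l u : ℕ → ℕ) (R : Matroid ℕ) : Prop :=
  R.E = Set.Icc 1 n ∧
  IsPresentation R r
    (fun i => insert i ((fun j => r + j) '' Set.Icc (l i - i + 1) (u i - i)))

/-- `M = N +_X e` is the principal extension of `N` adding `e` freely to `X`. -/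
def IsPrincipalExt (N : Matroid α) (X : Set α) (e : α) (M : Matroid α) : Prop :=
  M.E = insert e N.E ∧ ∀ Z ⊆ N.E,
    rnk M Z = rnk N Z ∧
    (X ⊆ N.closure Z → rnk M (insert e Z) = rnk N Z) ∧
    (¬ X ⊆ N.closure Z → rnk M (insert e Z) = rnk N Z + 1)

lemma bddAbove_rnkSet (M : Matroid α) [M.Finite] (X : Set α) :
    BddAbove {n | ∃ I, M.Indep I ∧ I ⊆ X ∧ I.ncard = n} :=
  ⟨M.E.ncard, fun n ⟨I, hI, _, hn⟩ => hn ▸ Set.ncard_le_ncard hI.subset_ground M.ground_finite⟩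

lemma ncard_le_rnk (M : Matroid α) [M.Finite] {I X : Set α} (hI : M.Indep I) (hIX : I ⊆ X) :
    I.ncard ≤ rnk M X :=
  le_csSup (bddAbove_rnkSet M X) ⟨I, hI, hIX, rfl⟩

lemma rnk_le (M : Matroid α) [M.Finite] {X : Set α} {n : ℕ}
    (h : ∀ I, M.Indep I → I ⊆ X → I.ncard ≤ n) : rnk M X ≤ n :=
  csSup_le ⟨0, ∅, M.empty_indep, empty_subset X, by simp⟩
    (fun m ⟨I, hI, hIX, hm⟩ => hm ▸ h I hI hIX)

lemma exists_min_dep (M : Matroid α) {D : Set α} (hD : ¬ M.Indep D) (hDfin : D.Finite) :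
    ∃ C ⊆ D, ¬ M.Indep C ∧ ∀ x ∈ C, M.Indep (C \ {x}) := by
  obtain ⟨C, ⟨hCD, hCdep⟩, hmin⟩ :=
    Set.Finite.exists_minimalFor (id : Set α → Set α)
      {C | C ⊆ D ∧ ¬ M.Indep C}
      (hDfin.finite_subsets.subset (fun C hC => hC.1)) ⟨D, Subset.rfl, hD⟩
  refine ⟨C, hCD, hCdep, fun x hx => ?_⟩
  by_contra hdep
  have := hmin (j := C \ {x}) ⟨(diff_subset).trans hCD, hdep⟩ diff_subset
  simp only [id] at this
  exact (this hx).2 rfl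

lemma indep_iff_cf (M : Matroid α) [M.Finite] {I : Set α} (hIE : I ⊆ M.E) :
    M.Indep I ↔ ∀ F, CyclicFlat M F → (I ∩ F).ncard ≤ rnk M F := by
  constructor
  · intro hI F _
    exact ncard_le_rnk M (hI.inter_right F) inter_subset_right
  · intro h
    by_contra hI
    obtain ⟨C, hCD, hCdep, hCmin⟩ := exists_min_dep M hI (M.ground_finite.subset hIE)
    have hCE : C ⊆ M.E := hCD.trans hIE
    set F := M.closure C with hF
    have hFE : F ⊆ M.E := M.closure_subset_ground C
    have hCF : C ⊆ F := M.subset_closure C hCE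
    obtain ⟨f, hf⟩ : C.Nonempty :=
      nonempty_iff_ne_empty.2 (fun h0 => hCdep (h0 ▸ M.empty_indep))
    have hB0 : M.Indep (C \ {f}) := hCmin f hf
    have hfcl : f ∈ M.closure (C \ {f}) := by
      by_contra hfc
      have : M.Indep (insert f (C \ {f})) := by
        rw [hB0.insert_indep_iff_of_notMem (by simp)]
        exact ⟨hCE hf, hfc⟩
      rw [insert_diff_singleton, insert_eq_of_mem hf] at this
      exact hCdep this
    have hclB0 : M.closure (C \ {f}) = F := by
      rw [hF, ← closure_insert_eq_of_mem_closure hfcl, insert_diff_singleton,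
        insert_eq_of_mem hf]
    -- F is a cyclic flat
    have hcf : CyclicFlat M F := by
      have hflat : M.IsFlat F := by
        refine ⟨fun I X hIF hIX => ?_, hFE⟩
        have h1 : X ⊆ M.closure I := (isBasis_iff_indep_subset_closure.1 hIX).2.2
        rwa [hIF.closure_eq_closure, hF, closure_closure] at h1
      refine ⟨hflat, fun e heF hcoloop => ?_⟩
      obtain ⟨C', hC'F, heC', hC'dep, hC'e⟩ :
          ∃ C', C' ⊆ F ∧ e ∈ C' ∧ ¬ M.Indep C' ∧ M.Indep (C' \ {e}) := by
        by_cases heC : e ∈ C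
        · exact ⟨C, hCF, heC, hCdep, hCmin e heC⟩
        · have heB0 : e ∉ C \ {f} := fun h => heC h.1
          have hdep : ¬ M.Indep (insert e (C \ {f})) := by
            intro hind
            exact ((hB0.insert_dep_iff).2 ⟨hclB0 ▸ heF, heB0⟩).not_indep hind
          obtain ⟨C'', hC''sub, hC''dep, hC''min⟩ :=
            exists_min_dep M hdep (((M.ground_finite.subset hCE).diff).insert e)
          have heC'' : e ∈ C'' := by
            by_contra hne
            exact hC''dep (hB0.subset (fun a ha => ((hC''sub ha).resolve_left
              (fun h => hne (h ▸ ha)))))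
          refine ⟨C'', hC''sub.trans (insert_subset heF ((diff_subset.trans hCF))), heC'',
            hC''dep, hC''min e heC''⟩
      have hres : (M ↾ F).Indep (C' \ {e}) :=
        restrict_indep_iff.2 ⟨hC'e, diff_subset.trans hC'F⟩
      obtain ⟨B, hB, hsub⟩ := hres.exists_isBase_superset
      have heB : e ∈ B := hcoloop B hB
      have : (M ↾ F).Indep C' := hB.indep.subset
        (fun a ha => by by_cases hae : a = e
                        · exact hae ▸ heB
                        · exact hsub ⟨ha, hae⟩)
      exact hC'dep (restrict_indep_iff.1 this).1
    -- rank bound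
    have hrnk : rnk M F ≤ (C \ {f}).ncard := by
      refine rnk_le M (fun J hJ hJF => ?_)
      obtain ⟨J₂, hJ₂, hJJ₂⟩ := hJ.subset_isBasis_of_subset hJF hFE
      have hbas : M.IsBasis (C \ {f}) F := hclB0 ▸ hB0.isBasis_closure
      have hcard := hJ₂.encard_eq_encard hbas
      have hJ₂fin : J₂.Finite := M.ground_finite.subset hJ₂.indep.subset_ground
      have : J₂.ncard = (C \ {f}).ncard := by
        rw [Set.ncard_def, Set.ncard_def, hcard]
      calc J.ncard ≤ J₂.ncard := Set.ncard_le_ncard hJJ₂ hJ₂fin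
        _ = (C \ {f}).ncard := this
    have h1 : C.ncard ≤ (I ∩ F).ncard :=
      Set.ncard_le_ncard (subset_inter hCD hCF) ((M.ground_finite.subset hIE).inter_of_left F)
    have h2 : (C \ {f}).ncard < C.ncard :=
      Set.ncard_diff_singleton_lt_of_mem hf (M.ground_finite.subset hCE)
    have := h F hcf
    omega


lemma mem_swap_image [DecidableEq α] {x y a : α} {F : Set α} :
    a ∈ (Equiv.swap x y) '' F ↔ (Equiv.swap x y) a ∈ F := by
  rw [Set.mem_image_equiv, Equiv.symm_swap]

lemma swap_image_of_mem_mem [DecidableEq α] {x y : α} {F : Set α}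
    (hx : x ∈ F) (hy : y ∈ F) : (Equiv.swap x y) '' F = F := by
  ext a
  rw [mem_swap_image, Equiv.swap_apply_def]
  split_ifs with h1 h2
  · subst h1; simp [hx, hy]
  · subst h2; simp [hx, hy]
  · rfl

lemma swap_image_of_not_mem [DecidableEq α] {x y : α} {F : Set α}
    (hx : x ∉ F) (hy : y ∉ F) : (Equiv.swap x y) '' F = F := by
  ext a
  rw [mem_swap_image, Equiv.swap_apply_def]
  split_ifs with h1 h2
  · subst h1; simp [hx, hy]
  · subst h2; simp [hx, hy]
  · rfl

lemma swap_image_mixed [DecidableEq α] {x y : α} (hne : x ≠ y) {F : Set α}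
    (hy : y ∈ F) (hx : x ∉ F) :
    (Equiv.swap x y) '' F = (F \ {y}) ∪ {x} := by
  ext a
  rw [mem_swap_image, Equiv.swap_apply_def]
  split_ifs with h1 h2
  · subst h1; simp [hx, hy]
  · subst h2; simp [hx, hne.symm]
  · simp only [mem_union, mem_diff, mem_singleton_iff]
    tauto

lemma swap_swap_image [DecidableEq α] (x y : α) (F : Set α) :
    (Equiv.swap x y) '' ((Equiv.swap x y) '' F) = F := by
  rw [← Set.image_comp]
  simp [Function.comp_def]


lemma transfer [DecidableEq α] {M M' M'' : Matroid α} {x y : α} (hne : x ≠ y)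
    (hM'Z : ∀ F : Set α, CyclicFlat M' F ↔
      ((CyclicFlat M F ∧ ¬ (y ∈ F ∧ x ∉ F)) ∨
       (∃ Y, CyclicFlat M Y ∧ y ∈ Y ∧ x ∉ Y ∧ F = (Y \ {y}) ∪ {x})))
    (hM'r1 : ∀ F : Set α, CyclicFlat M F → ¬ (y ∈ F ∧ x ∉ F) → rnk M' F = rnk M F)
    (hM'r2 : ∀ Y : Set α, CyclicFlat M Y → y ∈ Y → x ∉ Y →
      rnk M' ((Y \ {y}) ∪ {x}) = rnk M Y)
    (hM''Z : ∀ F : Set α, CyclicFlat M'' F ↔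
      ((CyclicFlat M F ∧ ¬ (x ∈ F ∧ y ∉ F)) ∨
       (∃ X, CyclicFlat M X ∧ x ∈ X ∧ y ∉ X ∧ F = (X \ {x}) ∪ {y})))
    (hM''r1 : ∀ F : Set α, CyclicFlat M F → ¬ (x ∈ F ∧ y ∉ F) → rnk M'' F = rnk M F)
    (hM''r2 : ∀ X : Set α, CyclicFlat M X → x ∈ X → y ∉ X →
      rnk M'' ((X \ {x}) ∪ {y}) = rnk M X)
    {F : Set α} (hF : CyclicFlat M'' F) :
    CyclicFlat M' ((Equiv.swap x y) '' F) ∧ rnk M'' F = rnk M' ((Equiv.swap x y) '' F) := by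
  rw [hM''Z] at hF
  rcases hF with ⟨hCF, hnxy⟩ | ⟨X, hX, hxX, hyX, rfl⟩
  · by_cases hxF : x ∈ F
    · have hyF : y ∈ F := by_contra fun h => hnxy ⟨hxF, h⟩
      rw [swap_image_of_mem_mem hxF hyF]
      refine ⟨(hM'Z F).2 (Or.inl ⟨hCF, fun h => h.2 hxF⟩), ?_⟩
      rw [hM''r1 F hCF hnxy, hM'r1 F hCF (fun h => h.2 hxF)]
    · by_cases hyF : y ∈ F
      · rw [swap_image_mixed hne hyF hxF]
        refine ⟨(hM'Z _).2 (Or.inr ⟨F, hCF, hyF, hxF, rfl⟩), ?_⟩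
        rw [hM''r1 F hCF (fun h => hxF h.1), hM'r2 F hCF hyF hxF]
      · rw [swap_image_of_not_mem hxF hyF]
        refine ⟨(hM'Z F).2 (Or.inl ⟨hCF, fun h => hyF h.1⟩), ?_⟩
        · rw [hM''r1 F hCF (fun h => hxF h.1), hM'r1 F hCF (fun h => hyF h.1)]
  · have himg : (Equiv.swap x y) '' ((X \ {x}) ∪ {y}) = X := by
      rw [Set.image_union, swap_image_of_not_mem (fun h => h.2 rfl) (fun h => hyX h.1)]
      have : (Equiv.swap x y) '' {y} = {x} := by simp
      rw [this, diff_union_self, union_eq_self_of_subset_right (singleton_subset_iff.2 hxX)]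
    rw [himg]
    refine ⟨(hM'Z X).2 (Or.inl ⟨hX, fun h => hyX h.1⟩), ?_⟩
    rw [hM''r2 X hX hxX hyX, hM'r1 X hX (fun h => hyX h.1)]


theorem statement1 [DecidableEq α] (M : Matroid α) [M.Finite] (x y : α)
    (hx : x ∈ M.E) (hy : y ∈ M.E)
    (hZx : ∃ F, CyclicFlat M F ∧ x ∈ F ∧ y ∉ F)
    (hZy : ∃ F, CyclicFlat M F ∧ y ∈ F ∧ x ∉ F)
    (hnm : ∀ X Y : Set α, CyclicFlat M X → x ∈ X → y ∉ X →
      CyclicFlat M Y → y ∈ Y → x ∉ Y → ¬ ModularPair M X Y)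
    (M' : Matroid α) (hM'E : M'.E = M.E)
    (hM'Z : ∀ F : Set α, CyclicFlat M' F ↔
      ((CyclicFlat M F ∧ ¬ (y ∈ F ∧ x ∉ F)) ∨
       (∃ Y, CyclicFlat M Y ∧ y ∈ Y ∧ x ∉ Y ∧ F = (Y \ {y}) ∪ {x})))
    (hM'r1 : ∀ F : Set α, CyclicFlat M F → ¬ (y ∈ F ∧ x ∉ F) → rnk M' F = rnk M F)
    (hM'r2 : ∀ Y : Set α, CyclicFlat M Y → y ∈ Y → x ∉ Y →
      rnk M' ((Y \ {y}) ∪ {x}) = rnk M Y)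
    (M'' : Matroid α) (hM''E : M''.E = M.E)
    (hM''Z : ∀ F : Set α, CyclicFlat M'' F ↔
      ((CyclicFlat M F ∧ ¬ (x ∈ F ∧ y ∉ F)) ∨
       (∃ X, CyclicFlat M X ∧ x ∈ X ∧ y ∉ X ∧ F = (X \ {x}) ∪ {y})))
    (hM''r1 : ∀ F : Set α, CyclicFlat M F → ¬ (x ∈ F ∧ y ∉ F) → rnk M'' F = rnk M F)
    (hM''r2 : ∀ X : Set α, CyclicFlat M X → x ∈ X → y ∉ X →
      rnk M'' ((X \ {x}) ∪ {y}) = rnk M X) :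
    Set.BijOn (Equiv.swap x y) M'.E M''.E ∧
    ∀ I ⊆ M'.E, (M'.Indep I ↔ M''.Indep ((Equiv.swap x y) '' I)) := by
  obtain ⟨F0, _, hxF0, hyF0⟩ := hZx
  have hne : x ≠ y := fun h => hyF0 (h ▸ hxF0)
  haveI hM'fin : M'.Finite := ⟨hM'E ▸ M.ground_finite⟩
  haveI hM''fin : M''.Finite := ⟨hM''E ▸ M.ground_finite⟩
  have hmaps : ∀ a ∈ M.E, (Equiv.swap x y) a ∈ M.E := by
    intro a ha
    rw [Equiv.swap_apply_def]
    split_ifs <;> assumption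
  have t1 : ∀ {F}, CyclicFlat M'' F → CyclicFlat M' ((Equiv.swap x y) '' F) ∧
      rnk M'' F = rnk M' ((Equiv.swap x y) '' F) :=
    fun {F} hF => transfer hne hM'Z hM'r1 hM'r2 hM''Z hM''r1 hM''r2 hF
  have t2 : ∀ {F}, CyclicFlat M' F → CyclicFlat M'' ((Equiv.swap x y) '' F) ∧
      rnk M' F = rnk M'' ((Equiv.swap x y) '' F) := by
    intro F hF
    rw [Equiv.swap_comm x y]
    exact transfer hne.symm hM''Z hM''r1 hM''r2 hM'Z hM'r1 hM'r2 hF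
  constructor
  · refine ⟨fun a ha => ?_, (Equiv.injective _).injOn, fun a ha => ?_⟩
    · rw [hM'E] at ha; rw [hM''E]; exact hmaps a ha
    · rw [hM''E] at ha
      exact ⟨(Equiv.swap x y) a, by rw [hM'E]; exact hmaps a ha, Equiv.swap_apply_self _ _ _⟩
  · intro I hI'
    have hIE : I ⊆ M.E := hM'E ▸ hI'
    have hsI : (Equiv.swap x y) '' I ⊆ M''.E := by
      rw [hM''E]; rintro _ ⟨a, ha, rfl⟩; exact hmaps a (hIE ha)
    rw [indep_iff_cf M' hI', indep_iff_cf M'' hsI]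
    constructor
    · intro h F hF
      obtain ⟨hG, hr⟩ := t1 hF
      have hcard : ((Equiv.swap x y) '' I ∩ F).ncard
          = (I ∩ (Equiv.swap x y) '' F).ncard := by
        have himg : (Equiv.swap x y) '' (I ∩ (Equiv.swap x y) '' F)
            = (Equiv.swap x y) '' I ∩ F := by
          rw [Set.image_inter (Equiv.injective _), swap_swap_image]
        rw [← himg, Set.ncard_image_of_injective _ (Equiv.injective _)]
      rw [hcard, hr]
      exact h _ hG
    · intro h F hF
      obtain ⟨hG, hr⟩ := t2 hF
      have hcard : (I ∩ F).ncard
          = ((Equiv.swap x y) '' I ∩ (Equiv.swap x y) '' F).ncard := by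
        rw [← Set.image_inter (Equiv.injective _),
          Set.ncard_image_of_injective _ (Equiv.injective _)]
      rw [hcard, hr]
      exact h _ hG

end Paper
end

section
/- Let M be a lattice path matroid on [n] with path presentation (N_1, N_2, ..., N_r), and let X = [a+1, a+k] be an interval in [n] with k ≥ 1. If the indices i with N_i ∩ X ≠ ∅ are exactly j+1, j+2, ..., j+t, then r(X) = min(t, k), where r is the rank function of M. -/
open Set Matroid

namespace Paper

variable {α : Type*} {β : Type*}

theorem statement5 (n r : ℕ) (l u : ℕ → ℕ) (M : Matroid ℕ) (h : IsLPM n r l u M)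
    (a k j t : ℕ) (hk : 1 ≤ k) (hXn : a + k ≤ n)
    (ht : {i ∈ Set.Icc 1 r | (Set.Icc (l i) (u i) ∩ Set.Icc (a + 1) (a + k)).Nonempty}
      = Set.Icc (j + 1) (j + t)) :
    rnk M (Set.Icc (a + 1) (a + k)) = min t k := by
  obtain ⟨hr1, hrn, hl, hu, hlu, hE, hsub, hindep⟩ := h
  set X : Set ℕ := Set.Icc (a + 1) (a + k) with hX
  -- basic facts from ht
  have hmem : ∀ i ∈ Set.Icc (j+1) (j+t), i ∈ Set.Icc 1 r ∧
      (Set.Icc (l i) (u i) ∩ X).Nonempty := by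
    intro i hi
    rw [← ht] at hi
    exact ⟨hi.1, hi.2⟩
  have hmem' : ∀ i ∈ Set.Icc 1 r, (Set.Icc (l i) (u i) ∩ X).Nonempty →
      i ∈ Set.Icc (j+1) (j+t) := by
    intro i hi hne
    rw [← ht]
    exact ⟨hi, hne⟩
  set m := min t k with hm
  -- bounds from a nonempty intersection
  have hbd : ∀ i ∈ Set.Icc (j+1) (j+t), l i ≤ a + k ∧ a + 1 ≤ u i := by
    intro i hi
    obtain ⟨x, hx1, hx2⟩ := (hmem i hi).2
    simp only [hX, Set.mem_Icc] at hx1 hx2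
    omega
  -- chain of u values
  have uchain : ∀ i', 1 ≤ i' → i' ≤ t → a + i' ≤ u (j + i') := by
    intro i' h1
    induction i', h1 using Nat.le_induction with
    | base => intro h1; exact (hbd (j+1) (by simp [Set.mem_Icc]; omega)).2
    | succ p hp ih =>
      intro hpt
      have h1 := ih (by omega)
      have h2 : u (j + p) < u (j + (p + 1)) := by
        apply hu (hmem (j+p) (by simp [Set.mem_Icc]; omega)).1
          (by have := (hmem (j+(p+1)) (by simp [Set.mem_Icc]; omega)).1; simpa using this)
        omega
      omega
  -- membership in ground set
  have hXE : X ⊆ M.E := by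
    rw [hE]; intro x hx; simp only [hX, Set.mem_Icc] at hx ⊢; omega
  -- the greedy transversal
  set f : ℕ → ℕ := fun i' => max (l (j + i')) (a + i') with hf
  have hfX : ∀ i' ∈ Set.Icc 1 m, f i' ∈ Set.Icc (l (j+i')) (u (j+i')) ∩ X := by
    intro i' hi'
    simp only [Set.mem_Icc] at hi'
    have hji : j + i' ∈ Set.Icc (j+1) (j+t) := by simp [Set.mem_Icc]; omega
    have h1 := hbd _ hji
    have h2 := uchain i' hi'.1 (by omega)
    have h3 := (hlu _ (hmem _ hji).1).2.2
    simp only [hf, Set.mem_inter_iff, hX, Set.mem_Icc]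
    omega
  have hfmono : StrictMonoOn f (Set.Icc 1 m) := by
    intro x hx y hy hxy
    simp only [Set.mem_Icc] at hx hy
    have hlx : l (j + x) < l (j + y) := by
      apply hl (hmem (j+x) (by simp [Set.mem_Icc]; omega)).1
        (hmem (j+y) (by simp [Set.mem_Icc]; omega)).1
      omega
    exact max_lt_max hlx (by omega)
  set I : Set ℕ := f '' Set.Icc 1 m with hI
  have hIX : I ⊆ X := by
    rintro x ⟨i', hi', rfl⟩; exact (hfX i' hi').2
  have hIndep : M.Indep I := by
    rw [hindep]
    refine ⟨hIX.trans hXE, fun x => j + Function.invFunOn f (Set.Icc 1 m) x, ?_, ?_⟩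
    · intro x hx y hy hxy
      have hxm : Function.invFunOn f (Set.Icc 1 m) x ∈ Set.Icc 1 m :=
        Function.invFunOn_mem hx
      have hym : Function.invFunOn f (Set.Icc 1 m) y ∈ Set.Icc 1 m :=
        Function.invFunOn_mem hy
      have hxe : f (Function.invFunOn f (Set.Icc 1 m) x) = x :=
        Function.invFunOn_eq (by simpa [hI, Set.mem_image] using hx)
      have hye : f (Function.invFunOn f (Set.Icc 1 m) y) = y :=
        Function.invFunOn_eq (by simpa [hI, Set.mem_image] using hy)
      have : Function.invFunOn f (Set.Icc 1 m) x = Function.invFunOn f (Set.Icc 1 m) y :=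
        Nat.add_left_cancel hxy
      rw [← hxe, ← hye, this]
    · intro x hx
      have hxm : Function.invFunOn f (Set.Icc 1 m) x ∈ Set.Icc 1 m :=
        Function.invFunOn_mem hx
      have hxe : f (Function.invFunOn f (Set.Icc 1 m) x) = x :=
        Function.invFunOn_eq (by simpa [hI, Set.mem_image] using hx)
      set p := Function.invFunOn f (Set.Icc 1 m) x with hp
      have hjp : j + p ∈ Set.Icc (j+1) (j+t) := by
        simp only [Set.mem_Icc] at hxm ⊢; omega
      refine ⟨(hmem _ hjp).1, ?_⟩
      have := (hfX p hxm).1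
      rwa [hxe] at this
  have hIcard : I.ncard = m := by
    rw [hI, Set.ncard_image_of_injOn hfmono.injOn, ← Finset.coe_Icc,
      Set.ncard_coe_finset, Nat.card_Icc]
    omega
  -- upper bound
  have hub : ∀ N : ℕ, (∃ I0, M.Indep I0 ∧ I0 ⊆ X ∧ I0.ncard = N) → N ≤ m := by
    rintro N ⟨I0, hI0, hI0X, rfl⟩
    obtain ⟨-, φ, hφinj, hφ⟩ := (hindep I0).mp hI0
    have hI0fin : I0.Finite := (Set.finite_Icc _ _).subset hI0X
    have himg : φ '' I0 ⊆ Set.Icc (j+1) (j+t) := by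
      rintro y ⟨x, hx, rfl⟩
      exact hmem' _ (hφ x hx).1 ⟨x, (hφ x hx).2, hI0X hx⟩
    have h1 : I0.ncard ≤ t := by
      calc I0.ncard = (φ '' I0).ncard := (Set.ncard_image_of_injOn hφinj).symm
        _ ≤ (Set.Icc (j+1) (j+t)).ncard := Set.ncard_le_ncard himg (Set.finite_Icc _ _)
        _ = t := by rw [← Finset.coe_Icc, Set.ncard_coe_finset, Nat.card_Icc]; omega
    have h2 : I0.ncard ≤ k := by
      calc I0.ncard ≤ X.ncard := Set.ncard_le_ncard hI0X (Set.finite_Icc _ _)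
        _ = k := by rw [hX, ← Finset.coe_Icc, Set.ncard_coe_finset, Nat.card_Icc]; omega
    omega
  have hmS : m ∈ {N | ∃ I0, M.Indep I0 ∧ I0 ⊆ X ∧ I0.ncard = N} := ⟨I, hIndep, hIX, hIcard⟩
  rw [rnk]
  exact le_antisymm (csSup_le ⟨m, hmS⟩ hub) (le_csSup ⟨m, hub⟩ hmS)

end Paper
end

section
/- Let M be a connected lattice path matroid on [n] with path presentation (N_1, N_2, ..., N_r). Let A = [a] be an initial connected flat of M and let B = [b, n] be a final connected flat of M. Then (A, B) is a modular pair if and only if the number of indices i ∈ [r] for which both A ∩ N_i and B ∩ N_i are nonempty is at most |A ∩ B|. -/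
open Set Matroid

namespace Paper

variable {α : Type*} {β : Type*}

/-! ### Auxiliary lemmas for statement6 -/

lemma rnk_set_nonempty (M : Matroid ℕ) (X : Set ℕ) :
    (0 : ℕ) ∈ {n | ∃ I, M.Indep I ∧ I ⊆ X ∧ I.ncard = n} :=
  ⟨∅, M.empty_indep, Set.empty_subset _, Set.ncard_empty _⟩

lemma rnk_le_of_cover (M : Matroid ℕ) (r : ℕ) (A : ℕ → Set ℕ)
    (hp : IsPresentation M r A) (X : Set ℕ) (K : Set ℕ) (hK : K.Finite)
    (hcov : ∀ i ∈ Set.Icc 1 r, ∀ x ∈ X, x ∈ A i → i ∈ K) :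
    rnk M X ≤ K.ncard := by
  refine csSup_le ⟨0, rnk_set_nonempty M X⟩ ?_
  rintro n ⟨I, hI, hIX, rfl⟩
  obtain ⟨hIE, φ, hinj, hφ⟩ := (hp.2 I).mp hI
  rw [← Set.ncard_image_of_injOn hinj]
  refine Set.ncard_le_ncard ?_ hK
  rintro _ ⟨x, hx, rfl⟩
  exact hcov _ (hφ x hx).1 x (hIX hx) (hφ x hx).2

lemma rnk_le_ncard' (M : Matroid ℕ) (X : Set ℕ) (hX : X.Finite) : rnk M X ≤ X.ncard := by
  refine csSup_le ⟨0, rnk_set_nonempty M X⟩ ?_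
  rintro n ⟨I, hI, hIX, rfl⟩
  exact Set.ncard_le_ncard hIX hX

lemma le_rnk_of_matching (M : Matroid ℕ) (hfin : M.E.Finite) (r : ℕ) (A : ℕ → Set ℕ)
    (hp : IsPresentation M r A) (X : Set ℕ) (hXE : X ⊆ M.E)
    (K : Set ℕ) (hKr : K ⊆ Set.Icc 1 r) (g : ℕ → ℕ) (hinj : Set.InjOn g K)
    (hg : ∀ i ∈ K, g i ∈ A i ∧ g i ∈ X) :
    K.ncard ≤ rnk M X := by
  have hbdd : BddAbove {n | ∃ I, M.Indep I ∧ I ⊆ X ∧ I.ncard = n} := by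
    refine ⟨M.E.ncard, ?_⟩
    rintro n ⟨I, hI, hIX, rfl⟩
    exact Set.ncard_le_ncard hI.subset_ground hfin
  have hsub : g '' K ⊆ X := by rintro _ ⟨i, hi, rfl⟩; exact (hg i hi).2
  have hind : M.Indep (g '' K) := by
    refine (hp.2 _).mpr ⟨hsub.trans hXE, Function.invFunOn g K, ?_, ?_⟩
    · intro x hx y hy hxy
      obtain ⟨i, hi, rfl⟩ := hx
      obtain ⟨j, hj, rfl⟩ := hy
      have h1 : g (Function.invFunOn g K (g i)) = g i := Function.invFunOn_eq ⟨i, hi, rfl⟩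
      have h2 : g (Function.invFunOn g K (g j)) = g j := Function.invFunOn_eq ⟨j, hj, rfl⟩
      rw [← h1, ← h2, hxy]
    · rintro _ ⟨i, hi, rfl⟩
      have h1 : g (Function.invFunOn g K (g i)) = g i := Function.invFunOn_eq ⟨i, hi, rfl⟩
      have h2 : Function.invFunOn g K (g i) ∈ K := Function.invFunOn_mem ⟨i, hi, rfl⟩
      refine ⟨hKr h2, ?_⟩
      have h3 := (hg _ h2).1
      rwa [h1] at h3
  exact le_csSup hbdd ⟨g '' K, hind, hsub, Set.ncard_image_of_injOn hinj⟩

theorem statement6 (n r : ℕ) (l u : ℕ → ℕ) (M : Matroid ℕ) (h : IsLPM n r l u M)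
    (hconn : MatConnected M) (a b : ℕ)
    (hA : InitialFlat r l a) (hB : FinalFlat r u b) :
    ModularPair M (Set.Icc 1 a) (Set.Icc b n) ↔
      {i ∈ Set.Icc 1 r | (Set.Icc 1 a ∩ Set.Icc (l i) (u i)).Nonempty ∧
          (Set.Icc b n ∩ Set.Icc (l i) (u i)).Nonempty}.ncard
        ≤ (Set.Icc 1 a ∩ Set.Icc b n).ncard := by
  obtain ⟨hr1, hrn, hl, hu, hbnds, hE, hpres⟩ := h
  clear hconn
  have hfin : M.E.Finite := by rw [hE]; exact Set.finite_Icc 1 n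
  obtain ⟨hAne, iA, hiA, hliA⟩ := hA
  obtain ⟨⟨iB, hiB, huiB⟩, hBne⟩ := hB
  have ha_n : a + 1 ≤ n := by
    have h1 := (hbnds iA hiA).1
    rw [hliA] at h1
    exact h1.2
  have hb2 : 2 ≤ b := by
    have h1 := (hbnds iB hiB).2.1
    have h2 : 1 ≤ u iB := h1.1
    have h3 := hBne iB hiB
    omega
  set T : Set ℕ := {i | i ∈ Set.Icc 1 r ∧ l i ≤ a} with hTdef
  set S : Set ℕ := {i | i ∈ Set.Icc 1 r ∧ b ≤ u i} with hSdef
  have hTfin : T.Finite := (Set.finite_Icc 1 r).subset (fun i hi => hi.1)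
  have hSfin : S.Finite := (Set.finite_Icc 1 r).subset (fun i hi => hi.1)
  have hTSfin : (T ∩ S).Finite := hTfin.subset Set.inter_subset_left
  -- the "mixed" set of the statement is T ∩ S
  have hmixeq : {i ∈ Set.Icc 1 r | (Set.Icc 1 a ∩ Set.Icc (l i) (u i)).Nonempty ∧
      (Set.Icc b n ∩ Set.Icc (l i) (u i)).Nonempty} = T ∩ S := by
    ext i
    simp only [Set.mem_setOf_eq, Set.mem_inter_iff, hTdef, hSdef]
    constructor
    · rintro ⟨hi, ⟨x, hx⟩, ⟨y, hy⟩⟩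
      simp only [Set.mem_inter_iff, Set.mem_Icc] at hx hy
      exact ⟨⟨hi, by omega⟩, ⟨hi, by omega⟩⟩
    · rintro ⟨⟨hi, hla⟩, ⟨-, hub⟩⟩
      have h1 := (hbnds i hi).1
      have h2 := (hbnds i hi).2.1
      have h3 := (hbnds i hi).2.2
      simp only [Set.mem_Icc] at h1 h2
      refine ⟨hi, ⟨l i, ?_⟩, ⟨u i, ?_⟩⟩ <;>
        simp only [Set.mem_inter_iff, Set.mem_Icc] <;> omega
  -- ground-set inclusions
  have hXEa : Set.Icc 1 a ⊆ M.E := by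
    rw [hE]; intro x hx; simp only [Set.mem_Icc] at hx ⊢; omega
  have hXEb : Set.Icc b n ⊆ M.E := by
    rw [hE]; intro x hx; simp only [Set.mem_Icc] at hx ⊢; omega
  have hXEu : Set.Icc 1 a ∪ Set.Icc b n ⊆ M.E := Set.union_subset hXEa hXEb
  have hXEi : Set.Icc 1 a ∩ Set.Icc b n ⊆ M.E := (Set.inter_subset_left).trans hXEa
  -- rank of A
  have hrnkA : rnk M (Set.Icc 1 a) = T.ncard := by
    apply le_antisymm
    · refine rnk_le_of_cover M r _ hpres _ _ hTfin ?_
      intro i hi x hx hxi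
      simp only [Set.mem_Icc] at hx hxi
      exact ⟨hi, by omega⟩
    · refine le_rnk_of_matching M hfin r _ hpres _ hXEa _ (fun i hi => hi.1) l
        (hl.injOn.mono (fun i hi => hi.1)) ?_
      intro i hi
      have h1 := (hbnds i hi.1).1
      have h3 := (hbnds i hi.1).2.2
      simp only [Set.mem_Icc] at h1
      have hla : l i ≤ a := hi.2
      constructor
      · simp only [Set.mem_Icc]; omega
      · simp only [Set.mem_Icc]; omega
  -- rank of B
  have hrnkB : rnk M (Set.Icc b n) = S.ncard := by
    apply le_antisymm
    · refine rnk_le_of_cover M r _ hpres _ _ hSfin ?_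
      intro i hi x hx hxi
      simp only [Set.mem_Icc] at hx hxi
      exact ⟨hi, by omega⟩
    · refine le_rnk_of_matching M hfin r _ hpres _ hXEb _ (fun i hi => hi.1) u
        (hu.injOn.mono (fun i hi => hi.1)) ?_
      intro i hi
      have h2 := (hbnds i hi.1).2.1
      have h3 := (hbnds i hi.1).2.2
      simp only [Set.mem_Icc] at h2
      have hub : b ≤ u i := hi.2
      constructor
      · simp only [Set.mem_Icc]; omega
      · simp only [Set.mem_Icc]; omega
  -- rank of A ∪ B
  have hrnkU : rnk M (Set.Icc 1 a ∪ Set.Icc b n) = (T ∪ S).ncard := by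
    apply le_antisymm
    · refine rnk_le_of_cover M r _ hpres _ _ (hTfin.union hSfin) ?_
      intro i hi x hx hxi
      simp only [Set.mem_Icc] at hxi
      rcases hx with hx | hx
      · simp only [Set.mem_Icc] at hx
        exact Or.inl ⟨hi, by omega⟩
      · simp only [Set.mem_Icc] at hx
        exact Or.inr ⟨hi, by omega⟩
    · by_cases hcase : b ≤ a + 1
      · have hTS : T ∪ S = Set.Icc 1 r := by
          ext i
          constructor
          · rintro (hi | hi)
            · exact hi.1
            · exact hi.1
          · intro hi
            have h1 := (hbnds i hi).1
            have h3 := (hbnds i hi).2.2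
            simp only [Set.mem_Icc] at h1
            by_cases hla : l i ≤ a
            · exact Or.inl ⟨hi, hla⟩
            · exact Or.inr ⟨hi, by omega⟩
        rw [hTS]
        refine le_rnk_of_matching M hfin r _ hpres _ hXEu _ le_rfl l hl.injOn ?_
        intro i hi
        have h1 := (hbnds i hi).1
        have h3 := (hbnds i hi).2.2
        simp only [Set.mem_Icc] at h1
        constructor
        · simp only [Set.mem_Icc]; omega
        · simp only [Set.mem_union, Set.mem_Icc]; omega
      · refine le_rnk_of_matching M hfin r _ hpres _ hXEu _
          (fun i hi => by rcases hi with h | h; exacts [h.1, h.1])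
          (fun i => if l i ≤ a then l i else u i) ?_ ?_
        · intro x hx y hy hxy
          have hxr : x ∈ Set.Icc 1 r := by rcases hx with h | h; exacts [h.1, h.1]
          have hyr : y ∈ Set.Icc 1 r := by rcases hy with h | h; exacts [h.1, h.1]
          have hSx : ¬ l x ≤ a → b ≤ u x := by
            intro hnx
            rcases hx with h | h
            · exact absurd h.2 hnx
            · exact h.2
          have hSy : ¬ l y ≤ a → b ≤ u y := by
            intro hny
            rcases hy with h | h
            · exact absurd h.2 hny
            · exact h.2
          simp only at hxy
          by_cases h1 : l x ≤ a <;> by_cases h2 : l y ≤ a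
          · rw [if_pos h1, if_pos h2] at hxy
            exact hl.injOn hxr hyr hxy
          · rw [if_pos h1, if_neg h2] at hxy
            have := hSy h2
            omega
          · rw [if_neg h1, if_pos h2] at hxy
            have := hSx h1
            omega
          · rw [if_neg h1, if_neg h2] at hxy
            exact hu.injOn hxr hyr hxy
        · intro i hi
          have hir : i ∈ Set.Icc 1 r := by rcases hi with h | h; exacts [h.1, h.1]
          have h1 := (hbnds i hir).1
          have h2 := (hbnds i hir).2.1
          have h3 := (hbnds i hir).2.2
          simp only [Set.mem_Icc] at h1 h2
          by_cases hla : l i ≤ a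
          · simp only [if_pos hla]
            constructor
            · simp only [Set.mem_Icc]; omega
            · exact Or.inl (by simp only [Set.mem_Icc]; omega)
          · have hub : b ≤ u i := by
              rcases hi with h | h
              · exact absurd h.2 hla
              · exact h.2
            simp only [if_neg hla]
            constructor
            · simp only [Set.mem_Icc]; omega
            · exact Or.inr (by simp only [Set.mem_Icc]; omega)
  -- A ∩ B as an interval and its cardinality
  have hIab : Set.Icc 1 a ∩ Set.Icc b n = Set.Icc b a := by
    ext x
    simp only [Set.mem_inter_iff, Set.mem_Icc]
    omega
  have hcardIcc : ∀ p q : ℕ, (Set.Icc p q).ncard = q + 1 - p := by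
    intro p q
    rw [← Finset.coe_Icc, Set.ncard_coe_finset, Nat.card_Icc]
  -- upper bounds for rank of A ∩ B
  have hInter_le_mix : rnk M (Set.Icc 1 a ∩ Set.Icc b n) ≤ (T ∩ S).ncard := by
    refine rnk_le_of_cover M r _ hpres _ _ hTSfin ?_
    intro i hi x hx hxi
    simp only [Set.mem_inter_iff, Set.mem_Icc] at hx hxi
    exact ⟨⟨hi, by omega⟩, ⟨hi, by omega⟩⟩
  have hInter_le_card : rnk M (Set.Icc 1 a ∩ Set.Icc b n) ≤ a + 1 - b := by
    rw [hIab]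
    have h5 := rnk_le_ncard' M (Set.Icc b a) (Set.finite_Icc b a)
    rwa [hcardIcc] at h5
  -- lower bound for rank of A ∩ B under the cardinality hypothesis
  have hge : (T ∩ S).ncard ≤ a + 1 - b →
      (T ∩ S).ncard ≤ rnk M (Set.Icc 1 a ∩ Set.Icc b n) := by
    intro hm
    rcases Set.eq_empty_or_nonempty (T ∩ S) with he | hne
    · simp [he]
    · set p₀ := sInf (T ∩ S) with hp0def
      have hp0 : p₀ ∈ T ∩ S := Nat.sInf_mem hne
      have hp0le : ∀ i ∈ T ∩ S, p₀ ≤ i := fun i hi => Nat.sInf_le hi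
      have key : ∀ d p, p ∈ Set.Icc 1 r → p + d ∈ Set.Icc 1 r → u p + d ≤ u (p + d) := by
        intro d
        induction d with
        | zero => intro p hp hpk; simp
        | succ k ih =>
          intro p hp hpk
          have he : p + (k + 1) = (p + k) + 1 := by ring
          rw [he] at hpk ⊢
          have hpk' : p + k ∈ Set.Icc 1 r := by
            simp only [Set.mem_Icc] at hp hpk ⊢; omega
          have h2 := ih p hp hpk'
          have h3 : u (p + k) < u (p + k + 1) := hu hpk' hpk (by omega)
          omega
      have hugrow : ∀ i ∈ T ∩ S, u p₀ + (i - p₀) ≤ u i := by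
        intro i hi
        have hle := hp0le i hi
        have heq : p₀ + (i - p₀) = i := by omega
        have h := key (i - p₀) p₀ hp0.1.1 (by rw [heq]; exact hi.1.1)
        rwa [heq] at h
      have hcontig : ∀ i ∈ T ∩ S, i + 1 - p₀ ≤ (T ∩ S).ncard := by
        intro i hi
        have hsub : Set.Icc p₀ i ⊆ T ∩ S := by
          intro j hj
          simp only [Set.mem_Icc] at hj
          have hp0r : p₀ ∈ Set.Icc 1 r := hp0.1.1
          have hir : i ∈ Set.Icc 1 r := hi.1.1
          have hj1 : j ∈ Set.Icc 1 r := by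
            simp only [Set.mem_Icc] at hp0r hir ⊢; omega
          have hlj : l j ≤ l i := hl.monotoneOn hj1 hir hj.2
          have huj : u p₀ ≤ u j := hu.monotoneOn hp0r hj1 hj.1
          exact ⟨⟨hj1, le_trans hlj hi.1.2⟩, ⟨hj1, le_trans hp0.2.2 huj⟩⟩
        calc i + 1 - p₀ = (Set.Icc p₀ i).ncard := (hcardIcc p₀ i).symm
          _ ≤ (T ∩ S).ncard := Set.ncard_le_ncard hsub hTSfin
      refine le_rnk_of_matching M hfin r _ hpres _ hXEi (T ∩ S)
        (fun i hi => hi.1.1) (fun i => max (l i) (b + (i - p₀))) ?_ ?_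
      · have hmono : ∀ x ∈ T ∩ S, ∀ y ∈ T ∩ S, x < y →
            max (l x) (b + (x - p₀)) < max (l y) (b + (y - p₀)) := by
          intro x hx y hy hxy
          have h1 : l x < l y := hl hx.1.1 hy.1.1 hxy
          have h2 : b + (x - p₀) < b + (y - p₀) := by
            have := hp0le x hx
            have := hp0le y hy
            omega
          exact max_lt_max h1 h2
        intro x hx y hy hxy
        rcases lt_trichotomy x y with hlt | heq | hlt
        · exact absurd hxy (ne_of_lt (hmono x hx y hy hlt))
        · exact heq
        · exact absurd hxy.symm (ne_of_lt (hmono y hy x hx hlt))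
      · intro i hi
        have h1 := (hbnds i hi.1.1).1
        have h3 := (hbnds i hi.1.1).2.2
        simp only [Set.mem_Icc] at h1
        have hup := hugrow i hi
        have hco := hcontig i hi
        have hpi := hp0le i hi
        have hub0 : b ≤ u p₀ := hp0.2.2
        have hla : l i ≤ a := hi.1.2
        have hv3 := max_choice (l i) (b + (i - p₀))
        set v := max (l i) (b + (i - p₀)) with hvdef
        have hv1 : l i ≤ v := le_max_left _ _
        have hv2 : b + (i - p₀) ≤ v := le_max_right _ _
        have hva : v ≤ a := by rcases hv3 with hc | hc <;> omega
        have hvu : v ≤ u i := by rcases hv3 with hc | hc <;> omega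
        constructor
        · simp only [Set.mem_Icc]; omega
        · simp only [Set.mem_inter_iff, Set.mem_Icc]; omega
  -- inclusion–exclusion
  have hincl : T.ncard + S.ncard = (T ∪ S).ncard + (T ∩ S).ncard := by
    rw [Set.ncard_union_add_ncard_inter T S hTfin hSfin]
  -- final assembly
  rw [hmixeq, hIab, hcardIcc]
  show rnk M (Set.Icc 1 a) + rnk M (Set.Icc b n) =
      rnk M (Set.Icc 1 a ∪ Set.Icc b n) + rnk M (Set.Icc 1 a ∩ Set.Icc b n) ↔ _
  rw [hrnkA, hrnkB, hrnkU]
  constructor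
  · intro hmp
    omega
  · intro hle
    have h1 := le_antisymm hInter_le_mix (hge hle)
    omega


end Paper
end

section
/- Let M = M[P,Q] be a connected lattice path matroid on [n]. Let A = [a] be an initial connected flat of M and let B = [b, n] be a final connected flat of M. Then (A, B) is a modular pair if and only if (A, B) is not mixed. -/
open Set Matroid

namespace Paper

variable {α : Type*} {β : Type*}

lemma aux_ncard_Icc (a b : ℕ) : (Set.Icc a b).ncard = b + 1 - a := by
  simp [Set.ncard_eq_toFinset_card']

lemma aux_gap {f : ℕ → ℕ} {r : ℕ} (hf : StrictMonoOn f (Set.Icc 1 r))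
    {i : ℕ} (hi : 1 ≤ i) : ∀ j, j ≤ r → i ≤ j → f i + (j - i) ≤ f j := by
  intro j
  induction j with
  | zero => intro _ h; omega
  | succ k ih =>
    intro hkr hik
    rcases Nat.eq_or_lt_of_le hik with hh | hh
    · rw [← hh]; simp
    · have h1 : f k < f (k + 1) :=
        hf (Set.mem_Icc.mpr ⟨by omega, by omega⟩) (Set.mem_Icc.mpr ⟨by omega, by omega⟩)
          (by omega)
      have h2 := ih (by omega) (by omega)
      omega

lemma aux_initseg {r : ℕ} {S : Set ℕ} (hS : S ⊆ Set.Icc 1 r)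
    (hdc : ∀ i ∈ S, ∀ j, 1 ≤ j → j ≤ i → j ∈ S) :
    S = Set.Icc 1 S.ncard := by
  have hfin : S.Finite := (Set.finite_Icc 1 r).subset hS
  have hsub : Set.Icc 1 S.ncard ⊆ S := by
    intro k hk
    rw [Set.mem_Icc] at hk
    by_contra hkS
    have hS' : S ⊆ Set.Icc 1 (k - 1) := by
      intro x hx
      have hx1 := Set.mem_Icc.mp (hS hx)
      rw [Set.mem_Icc]
      refine ⟨hx1.1, ?_⟩
      by_contra hxk
      exact hkS (hdc x hx k hk.1 (by omega))
    have hcard : S.ncard ≤ k - 1 := by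
      have := Set.ncard_le_ncard hS' (Set.finite_Icc _ _)
      rwa [aux_ncard_Icc, Nat.add_sub_cancel] at this
    omega
  exact (Set.eq_of_subset_of_ncard_le hsub
    (by rw [aux_ncard_Icc, Nat.add_sub_cancel]) hfin).symm

lemma aux_indep (M : Matroid ℕ) (n r : ℕ) (l u : ℕ → ℕ)
    (hE : M.E = Set.Icc 1 n)
    (hpres : IsPresentation M r (fun i => Set.Icc (l i) (u i)))
    (S : Set ℕ) (m : ℕ → ℕ) (hS : S ⊆ Set.Icc 1 r)
    (hinj : Set.InjOn m S)
    (hm : ∀ i ∈ S, l i ≤ m i ∧ m i ≤ u i ∧ 1 ≤ m i ∧ m i ≤ n) :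
    M.Indep (m '' S) := by
  have hleft : ∀ i ∈ S, Function.invFunOn m S (m i) = i :=
    fun i hi => hinj.leftInvOn_invFunOn hi
  rw [hpres.2]
  refine ⟨?_, Function.invFunOn m S, ?_, ?_⟩
  · rintro x ⟨i, hi, rfl⟩
    rw [hE, Set.mem_Icc]
    exact ⟨(hm i hi).2.2.1, (hm i hi).2.2.2⟩
  · rintro x ⟨i, hi, rfl⟩ y ⟨j, hj, rfl⟩ hxy
    rw [hleft i hi, hleft j hj] at hxy
    rw [hxy]
  · rintro x ⟨i, hi, rfl⟩
    rw [hleft i hi]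
    exact ⟨hS hi, Set.mem_Icc.mpr ⟨(hm i hi).1, (hm i hi).2.1⟩⟩

lemma aux_card_le (M : Matroid ℕ) (n r : ℕ) (l u : ℕ → ℕ)
    (hpres : IsPresentation M r (fun i => Set.Icc (l i) (u i)))
    (X T : Set ℕ) (hT : T.Finite)
    (hcrit : ∀ x ∈ X, ∀ j, j ∈ Set.Icc 1 r → l j ≤ x → x ≤ u j → j ∈ T)
    (I : Set ℕ) (hI : M.Indep I) (hIX : I ⊆ X) : I.ncard ≤ T.ncard := by
  obtain ⟨hIE, φ, hφinj, hφ⟩ := (hpres.2 I).mp hI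
  have himg : φ '' I ⊆ T := by
    rintro _ ⟨x, hx, rfl⟩
    obtain ⟨h1, h2⟩ := hφ x hx
    simp only [Set.mem_Icc] at h2
    exact hcrit x (hIX hx) (φ x) h1 h2.1 h2.2
  calc I.ncard = (φ '' I).ncard := (Set.ncard_image_of_injOn hφinj).symm
    _ ≤ T.ncard := Set.ncard_le_ncard himg hT

lemma rnk_le_of (M : Matroid ℕ) (X : Set ℕ) (v : ℕ)
    (hub : ∀ I, M.Indep I → I ⊆ X → I.ncard ≤ v) : rnk M X ≤ v := by
  have hne : {k | ∃ I, M.Indep I ∧ I ⊆ X ∧ I.ncard = k}.Nonempty :=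
    ⟨0, ∅, M.empty_indep, Set.empty_subset X, Set.ncard_empty ℕ⟩
  refine csSup_le hne ?_
  rintro k ⟨I, hI, hIX, rfl⟩
  exact hub I hI hIX

lemma rnk_eq_of (M : Matroid ℕ) (X : Set ℕ) (v : ℕ)
    (hub : ∀ I, M.Indep I → I ⊆ X → I.ncard ≤ v)
    (hex : ∃ I, M.Indep I ∧ I ⊆ X ∧ I.ncard = v) : rnk M X = v :=
  le_antisymm (rnk_le_of M X v hub)
    (le_csSup ⟨v, by rintro k ⟨I, hI, hIX, rfl⟩; exact hub I hI hIX⟩ hex)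

theorem statement7 (n r : ℕ) (l u : ℕ → ℕ) (M : Matroid ℕ) (h : IsLPM n r l u M)
    (hconn : MatConnected M) (a b : ℕ)
    (hA : InitialFlat r l a) (hB : FinalFlat r u b) :
    ModularPair M (Set.Icc 1 a) (Set.Icc b n) ↔ ¬ Mixed r l u a b := by
  obtain ⟨hr1, hrn, hl, hu, hbnd, hE, hpres⟩ := h
  obtain ⟨hlne, i0, hi0mem, hi0⟩ := hA
  obtain ⟨⟨j0, hj0mem, hj0⟩, hune⟩ := hB
  unfold ModularPair Mixed
  set SA := {i ∈ Set.Icc 1 r | l i ≤ a} with hSAdef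
  set SB := {i ∈ Set.Icc 1 r | u i ≤ b - 1} with hSBdef
  set α' := SA.ncard with hαdef
  set β' := SB.ncard with hβdef
  have hb2 : 2 ≤ b := by
    have h1 := Set.mem_Icc.mp (hbnd j0 hj0mem).2.1
    omega
  have han : a + 1 ≤ n := by
    have h1 := Set.mem_Icc.mp (hbnd i0 hi0mem).1
    omega
  have hSAsub : SA ⊆ Set.Icc 1 r := Set.sep_subset _ _
  have hSBsub : SB ⊆ Set.Icc 1 r := Set.sep_subset _ _
  have hSAeq : SA = Set.Icc 1 α' := by
    apply aux_initseg hSAsub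
    rintro i ⟨hi1, hi2⟩ j hj1 hj2
    have hir := Set.mem_Icc.mp hi1
    refine ⟨Set.mem_Icc.mpr ⟨hj1, by omega⟩, ?_⟩
    calc l j ≤ l i := hl.monotoneOn (Set.mem_Icc.mpr ⟨hj1, by omega⟩) hi1 hj2
      _ ≤ a := hi2
  have hSBeq : SB = Set.Icc 1 β' := by
    apply aux_initseg hSBsub
    rintro i ⟨hi1, hi2⟩ j hj1 hj2
    have hir := Set.mem_Icc.mp hi1
    refine ⟨Set.mem_Icc.mpr ⟨hj1, by omega⟩, ?_⟩
    calc u j ≤ u i := hu.monotoneOn (Set.mem_Icc.mpr ⟨hj1, by omega⟩) hi1 hj2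
      _ ≤ b - 1 := hi2
  have hmemA : ∀ i, 1 ≤ i → i ≤ r → (l i ≤ a ↔ i ≤ α') := by
    intro i h1 h2
    constructor
    · intro hla
      have hm : i ∈ SA := ⟨Set.mem_Icc.mpr ⟨h1, h2⟩, hla⟩
      rw [hSAeq, Set.mem_Icc] at hm
      exact hm.2
    · intro hi
      have hm : i ∈ SA := by rw [hSAeq]; exact Set.mem_Icc.mpr ⟨h1, hi⟩
      exact hm.2
  have hmemB : ∀ i, 1 ≤ i → i ≤ r → (u i ≤ b - 1 ↔ i ≤ β') := by
    intro i h1 h2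
    constructor
    · intro hla
      have hm : i ∈ SB := ⟨Set.mem_Icc.mpr ⟨h1, h2⟩, hla⟩
      rw [hSBeq, Set.mem_Icc] at hm
      exact hm.2
    · intro hi
      have hm : i ∈ SB := by rw [hSBeq]; exact Set.mem_Icc.mpr ⟨h1, hi⟩
      exact hm.2
  have hαr : α' ≤ r := by
    rcases Nat.eq_zero_or_pos α' with h0 | h0
    · omega
    · have hm : α' ∈ SA := by rw [hSAeq]; exact Set.mem_Icc.mpr ⟨h0, le_refl _⟩
      exact (Set.mem_Icc.mp (hSAsub hm)).2
  have hβr : β' ≤ r := by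
    rcases Nat.eq_zero_or_pos β' with h0 | h0
    · omega
    · have hm : β' ∈ SB := by rw [hSBeq]; exact Set.mem_Icc.mpr ⟨h0, le_refl _⟩
      exact (Set.mem_Icc.mp (hSBsub hm)).2
  have hlge : ∀ i, 1 ≤ i → i ≤ r → i ≤ l i := by
    intro i h1 h2
    have h3 := @aux_gap l r hl 1 (le_refl 1) i h2 h1
    have h4 := (Set.mem_Icc.mp (hbnd 1 (Set.mem_Icc.mpr ⟨le_refl 1, hr1⟩)).1).1
    omega
  have huge : ∀ i, 1 ≤ i → i ≤ r → i ≤ u i := by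
    intro i h1 h2
    have h3 := @aux_gap u r hu 1 (le_refl 1) i h2 h1
    have h4 := (Set.mem_Icc.mp (hbnd 1 (Set.mem_Icc.mpr ⟨le_refl 1, hr1⟩)).2.1).1
    omega
  have hαa : α' ≤ a := by
    rcases Nat.eq_zero_or_pos α' with h0 | h0
    · omega
    · have h5 := (hmemA α' h0 hαr).mpr (le_refl _)
      have h6 := hlge α' h0 hαr
      omega
  have hβb : β' ≤ b - 1 := by
    rcases Nat.eq_zero_or_pos β' with h0 | h0
    · omega
    · have h5 := (hmemB β' h0 hβr).mpr (le_refl _)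
      have h6 := huge β' h0 hβr
      omega
  have hub2 : ∀ i, 1 ≤ i → i ≤ r → β' < i → b + (i - (β' + 1)) + 1 ≤ u i := by
    intro i h1 h2 h3
    have hm1 : ¬ (u (β' + 1) ≤ b - 1) := fun hc => by
      have h5 := (hmemB (β' + 1) (by omega) (by omega)).mp hc
      omega
    have hm2 : u (β' + 1) ≠ b := hune (β' + 1) (Set.mem_Icc.mpr ⟨by omega, by omega⟩)
    have hm3 := @aux_gap u r hu (β' + 1) (by omega) i h2 (by omega)
    omega
  have hrkA : rnk M (Set.Icc 1 a) = α' := by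
    apply rnk_eq_of
    · intro I hI hIX
      exact aux_card_le M n r l u hpres (Set.Icc 1 a) SA
        ((Set.finite_Icc 1 r).subset hSAsub)
        (by
          intro x hx j hj hlj hxu
          have hx' := Set.mem_Icc.mp hx
          exact ⟨hj, by omega⟩) I hI hIX
    · refine ⟨l '' SA, aux_indep M n r l u hE hpres SA l hSAsub (hl.injOn.mono hSAsub) ?_,
        ?_, Set.ncard_image_of_injOn (hl.injOn.mono hSAsub)⟩
      · intro i hi
        have h1 := Set.mem_Icc.mp (hbnd i hi.1).1
        exact ⟨le_refl _, (hbnd i hi.1).2.2, h1.1, h1.2⟩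
      · rintro x ⟨i, hi, rfl⟩
        have h1 := Set.mem_Icc.mp (hbnd i hi.1).1
        exact Set.mem_Icc.mpr ⟨h1.1, hi.2⟩
  have hrkB : rnk M (Set.Icc b n) = r - β' := by
    apply rnk_eq_of
    · intro I hI hIX
      have hcl := aux_card_le M n r l u hpres (Set.Icc b n) (Set.Icc (β' + 1) r)
        (Set.finite_Icc _ _)
        (by
          intro x hx j hj hlj hxu
          have hx' := Set.mem_Icc.mp hx
          have hj' := Set.mem_Icc.mp hj
          rw [Set.mem_Icc]
          refine ⟨?_, hj'.2⟩
          by_contra hc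
          have h5 := (hmemB j hj'.1 hj'.2).mpr (by omega)
          omega) I hI hIX
      rw [aux_ncard_Icc] at hcl
      omega
    · have hsub : Set.Icc (β' + 1) r ⊆ Set.Icc 1 r := by
        intro i hi
        rw [Set.mem_Icc] at *
        omega
      refine ⟨u '' Set.Icc (β' + 1) r,
        aux_indep M n r l u hE hpres _ u hsub (hu.injOn.mono hsub) ?_, ?_, ?_⟩
      · intro i hi
        rw [Set.mem_Icc] at hi
        have h1 := Set.mem_Icc.mp (hbnd i (Set.mem_Icc.mpr ⟨by omega, hi.2⟩)).2.1
        exact ⟨(hbnd i (Set.mem_Icc.mpr ⟨by omega, hi.2⟩)).2.2, le_refl _, h1.1, h1.2⟩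
      · rintro x ⟨i, hi, rfl⟩
        rw [Set.mem_Icc] at hi
        have h1 := Set.mem_Icc.mp (hbnd i (Set.mem_Icc.mpr ⟨by omega, hi.2⟩)).2.1
        have hge : ¬ (u i ≤ b - 1) := fun hc => by
          have h5 := (hmemB i (by omega) hi.2).mp hc
          omega
        exact Set.mem_Icc.mpr ⟨by omega, h1.2⟩
      · rw [Set.ncard_image_of_injOn (hu.injOn.mono hsub), aux_ncard_Icc]
        omega
  have hrkEmpty : rnk M (∅ : Set ℕ) = 0 := by
    apply rnk_eq_of
    · intro I hI hIX
      rw [Set.subset_empty_iff.mp hIX]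
      simp
    · exact ⟨∅, M.empty_indep, Set.empty_subset _, Set.ncard_empty ℕ⟩
  by_cases hab : b ≤ a
  · -- Case 2 : the flats overlap
    have hUn : Set.Icc 1 a ∪ Set.Icc b n = Set.Icc 1 n := by
      ext x
      simp only [Set.mem_union, Set.mem_Icc]
      omega
    have hIn : Set.Icc 1 a ∩ Set.Icc b n = Set.Icc b a := by
      ext x
      simp only [Set.mem_inter_iff, Set.mem_Icc]
      omega
    have hβα : β' ≤ α' := by
      apply Set.ncard_le_ncard ?_ ((Set.finite_Icc 1 r).subset hSAsub)
      rintro i ⟨hi1, hi2⟩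
      have h5 := (hbnd i hi1).2.2
      exact ⟨hi1, by omega⟩
    have hrkU : rnk M (Set.Icc 1 n) = r := by
      apply rnk_eq_of
      · intro I hI hIX
        have hcl := aux_card_le M n r l u hpres _ (Set.Icc 1 r) (Set.finite_Icc _ _)
          (fun x _ j hj _ _ => hj) I hI hIX
        rwa [aux_ncard_Icc, Nat.add_sub_cancel] at hcl
      · refine ⟨l '' Set.Icc 1 r, aux_indep M n r l u hE hpres _ l (le_refl _) hl.injOn ?_,
          ?_, ?_⟩
        · intro i hi
          have h1 := Set.mem_Icc.mp (hbnd i hi).1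
          exact ⟨le_refl _, (hbnd i hi).2.2, h1.1, h1.2⟩
        · rintro x ⟨i, hi, rfl⟩
          exact (hbnd i hi).1
        · rw [Set.ncard_image_of_injOn hl.injOn, aux_ncard_Icc]
          omega
    rw [hUn, hIn, hrkA, hrkB, hrkU]
    by_cases hmix : a - α' < b - 1 - β' ∧ β' < α'
    · apply iff_of_false
      · intro heq
        have h7 : rnk M (Set.Icc b a) ≤ a + 1 - b := by
          apply rnk_le_of
          intro I hI hIX
          have h8 := Set.ncard_le_ncard hIX (Set.finite_Icc _ _)
          rwa [aux_ncard_Icc] at h8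
        omega
      · exact not_not_intro hmix
    · have hmix' : ¬ (a - α' < b - 1 - β') ∨ ¬ (β' < α') := by tauto
      have hkey : ∀ i, β' + 1 ≤ i → i ≤ α' → b + (i - (β' + 1)) ≤ a := by
        intro i h1 h2
        rcases hmix' with hc | hc <;> omega
      have h8 : rnk M (Set.Icc b a) = α' - β' := by
        apply rnk_eq_of
        · intro I hI hIX
          have hcl := aux_card_le M n r l u hpres _ (Set.Icc (β' + 1) α')
            (Set.finite_Icc _ _)
            (by
              intro x hx j hj hlj hxu
              rw [Set.mem_Icc] at hx hj ⊢
              constructor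
              · by_contra hc
                have h5 := (hmemB j hj.1 hj.2).mpr (by omega)
                omega
              · exact (hmemA j hj.1 hj.2).mp (by omega)) I hI hIX
          rw [aux_ncard_Icc] at hcl
          omega
        · set m : ℕ → ℕ := fun i => max (l i) (b + (i - (β' + 1))) with hm
          have hSsub : Set.Icc (β' + 1) α' ⊆ Set.Icc 1 r := by
            intro i hi
            rw [Set.mem_Icc] at *
            omega
          have hmono : ∀ i ∈ Set.Icc (β' + 1) α', ∀ j ∈ Set.Icc (β' + 1) α',
              i < j → m i < m j := by
            intro i hi j hj hij
            rw [Set.mem_Icc] at hi hj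
            exact max_lt_max
              (hl (Set.mem_Icc.mpr ⟨by omega, by omega⟩)
                (Set.mem_Icc.mpr ⟨by omega, by omega⟩) hij) (by omega)
          have hinj : Set.InjOn m (Set.Icc (β' + 1) α') := by
            intro i hi j hj hij
            rcases lt_trichotomy i j with hc | hc | hc
            · exact absurd hij (Nat.ne_of_lt (hmono i hi j hj hc))
            · exact hc
            · exact absurd hij.symm (Nat.ne_of_lt (hmono j hj i hi hc))
          refine ⟨m '' Set.Icc (β' + 1) α',
            aux_indep M n r l u hE hpres _ m hSsub hinj ?_, ?_, ?_⟩
          · intro i hi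
            rw [Set.mem_Icc] at hi
            have hir : i ≤ r := by omega
            have h1 := Set.mem_Icc.mp (hbnd i (Set.mem_Icc.mpr ⟨by omega, hir⟩)).1
            have h2 := hub2 i (by omega) hir (by omega)
            have h3 : l i ≤ a := (hmemA i (by omega) hir).mpr hi.2
            have h4 : b + (i - (β' + 1)) ≤ a := hkey i hi.1 hi.2
            refine ⟨le_max_left _ _, ?_, ?_, ?_⟩
            · exact max_le ((hbnd i (Set.mem_Icc.mpr ⟨by omega, hir⟩)).2.2) (by omega)
            · exact le_trans h1.1 (le_max_left _ _)
            · exact le_trans (max_le h3 h4) (by omega)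
          · rintro x ⟨i, hi, rfl⟩
            rw [Set.mem_Icc] at hi
            have hir : i ≤ r := by omega
            have h3 : l i ≤ a := (hmemA i (by omega) hir).mpr hi.2
            have h4 : b + (i - (β' + 1)) ≤ a := hkey i hi.1 hi.2
            exact Set.mem_Icc.mpr ⟨le_trans (by omega) (le_max_right _ _), max_le h3 h4⟩
          · rw [Set.ncard_image_of_injOn hinj, aux_ncard_Icc]
            omega
      rw [h8]
      apply iff_of_true
      · omega
      · exact hmix
  · -- Case 1 : disjoint flats, a < b
    have hIn : Set.Icc 1 a ∩ Set.Icc b n = (∅ : Set ℕ) := by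
      ext x
      simp only [Set.mem_inter_iff, Set.mem_Icc, Set.mem_empty_iff_false, iff_false, not_and]
      omega
    rw [hIn, hrkA, hrkB, hrkEmpty]
    by_cases hord : α' ≤ β'
    · have hrkU : rnk M (Set.Icc 1 a ∪ Set.Icc b n) = α' + (r - β') := by
        apply rnk_eq_of
        · intro I hI hIX
          have hcl := aux_card_le M n r l u hpres _
            (Set.Icc 1 α' ∪ Set.Icc (β' + 1) r)
            ((Set.finite_Icc _ _).union (Set.finite_Icc _ _))
            (by
              intro x hx j hj hlj hxu
              have hj' := Set.mem_Icc.mp hj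
              rcases hx with hx | hx
              · rw [Set.mem_Icc] at hx
                exact Or.inl (Set.mem_Icc.mpr ⟨hj'.1, (hmemA j hj'.1 hj'.2).mp (by omega)⟩)
              · rw [Set.mem_Icc] at hx
                refine Or.inr (Set.mem_Icc.mpr ⟨?_, hj'.2⟩)
                by_contra hc
                have h5 := (hmemB j hj'.1 hj'.2).mpr (by omega)
                omega) I hI hIX
          rw [Set.ncard_union_eq
            (by
              rw [Set.disjoint_left]
              intro i hi1 hi2
              rw [Set.mem_Icc] at hi1 hi2
              omega) (Set.finite_Icc _ _) (Set.finite_Icc _ _),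
            aux_ncard_Icc, aux_ncard_Icc] at hcl
          omega
        · set m : ℕ → ℕ := fun i => if i ≤ α' then l i else u i with hm
          have hSsub : Set.Icc 1 α' ∪ Set.Icc (β' + 1) r ⊆ Set.Icc 1 r := by
            rintro i (hi | hi) <;> rw [Set.mem_Icc] at * <;> omega
          have hmono : ∀ i ∈ Set.Icc 1 α' ∪ Set.Icc (β' + 1) r,
              ∀ j ∈ Set.Icc 1 α' ∪ Set.Icc (β' + 1) r, i < j → m i < m j := by
            intro i hi j hj hij
            have hi' := Set.mem_Icc.mp (hSsub hi)
            have hj'' := Set.mem_Icc.mp (hSsub hj)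
            by_cases hcj : j ≤ α'
            · have hci : i ≤ α' := by omega
              simp only [hm, if_pos hci, if_pos hcj]
              exact hl (Set.mem_Icc.mpr hi') (Set.mem_Icc.mpr hj'') hij
            · by_cases hci : i ≤ α'
              · simp only [hm, if_pos hci, if_neg hcj]
                have h1 : l i ≤ a := (hmemA i hi'.1 hi'.2).mpr hci
                have h2 : ¬ (u j ≤ b - 1) := by
                  have hjmem : β' + 1 ≤ j := by
                    rcases hj with hj | hj
                    · exact absurd (Set.mem_Icc.mp hj).2 hcj
                    · exact (Set.mem_Icc.mp hj).1
                  intro hc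
                  have h5 := (hmemB j hj''.1 hj''.2).mp hc
                  omega
                omega
              · simp only [hm, if_neg hci, if_neg hcj]
                exact hu (Set.mem_Icc.mpr hi') (Set.mem_Icc.mpr hj'') hij
          have hinj : Set.InjOn m (Set.Icc 1 α' ∪ Set.Icc (β' + 1) r) := by
            intro i hi j hj hij
            rcases lt_trichotomy i j with hc | hc | hc
            · exact absurd hij (Nat.ne_of_lt (hmono i hi j hj hc))
            · exact hc
            · exact absurd hij.symm (Nat.ne_of_lt (hmono j hj i hi hc))
          refine ⟨m '' (Set.Icc 1 α' ∪ Set.Icc (β' + 1) r),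
            aux_indep M n r l u hE hpres _ m hSsub hinj ?_, ?_, ?_⟩
          · intro i hi
            rcases hi with hi | hi
            · rw [Set.mem_Icc] at hi
              have h1 := Set.mem_Icc.mp (hbnd i (Set.mem_Icc.mpr ⟨hi.1, by omega⟩)).1
              simp only [hm, if_pos hi.2]
              exact ⟨le_refl _, (hbnd i (Set.mem_Icc.mpr ⟨hi.1, by omega⟩)).2.2, h1.1, h1.2⟩
            · rw [Set.mem_Icc] at hi
              have h1i : ¬ (i ≤ α') := by omega
              have h1 := Set.mem_Icc.mp (hbnd i (Set.mem_Icc.mpr ⟨by omega, hi.2⟩)).2.1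
              simp only [hm, if_neg h1i]
              exact ⟨(hbnd i (Set.mem_Icc.mpr ⟨by omega, hi.2⟩)).2.2, le_refl _, h1.1, h1.2⟩
          · rintro x ⟨i, hi, rfl⟩
            rcases hi with hi | hi
            · rw [Set.mem_Icc] at hi
              have h3 : l i ≤ a := (hmemA i hi.1 (by omega)).mpr hi.2
              have h1 := Set.mem_Icc.mp (hbnd i (Set.mem_Icc.mpr ⟨hi.1, by omega⟩)).1
              simp only [hm, if_pos hi.2]
              exact Or.inl (Set.mem_Icc.mpr ⟨h1.1, h3⟩)
            · rw [Set.mem_Icc] at hi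
              have h1i : ¬ (i ≤ α') := by omega
              have h1 := Set.mem_Icc.mp (hbnd i (Set.mem_Icc.mpr ⟨by omega, hi.2⟩)).2.1
              have h2 : ¬ (u i ≤ b - 1) := fun hc => by
                have h5 := (hmemB i (by omega) hi.2).mp hc
                omega
              simp only [hm, if_neg h1i]
              exact Or.inr (Set.mem_Icc.mpr ⟨by omega, h1.2⟩)
          · rw [Set.ncard_image_of_injOn hinj,
              Set.ncard_union_eq
                (by
                  rw [Set.disjoint_left]
                  intro i hi1 hi2
                  rw [Set.mem_Icc] at hi1 hi2
                  omega) (Set.finite_Icc _ _) (Set.finite_Icc _ _),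
              aux_ncard_Icc, aux_ncard_Icc]
            omega
      rw [hrkU]
      apply iff_of_true
      · omega
      · rintro ⟨h1, h2⟩
        omega
    · apply iff_of_false
      · intro heq
        have h9 : rnk M (Set.Icc 1 a ∪ Set.Icc b n) ≤ r := by
          apply rnk_le_of
          intro I hI hIX
          have hcl := aux_card_le M n r l u hpres _ (Set.Icc 1 r) (Set.finite_Icc _ _)
            (fun x _ j hj _ _ => hj) I hI hIX
          rwa [aux_ncard_Icc, Nat.add_sub_cancel] at hcl
        omega
      · exact not_not_intro ⟨by omega, by omega⟩

end Paper
end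

section
/- Let (Y_1, Y_2, ..., Y_r) be a presentation of a transversal matroid N such that for every e ∈ E(N) the support s(e) = {i ∈ [r] : e ∈ Y_i} is an interval in [r]. Then: (1) for every circuit C of N, the support s(C) = ∪_{e ∈ C} s(e) is an interval in [r]; and (2) for every flat F of N with |F| ≥ 2 such that N|F is connected, the support s(F) is an interval I in [r] and F = {e ∈ E(N) : s(e) ⊆ I}. -/
open Set Matroid

namespace Paper

variable {α : Type*} {β : Type*}

/-- Counting upper bound for independent sets in a transversal matroid. -/
lemma count_le (N : Matroid α) [N.Finite] (r : ℕ) (Y : ℕ → Set α)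
    (hpres : IsPresentation N r Y) {X A I : Set α} (hX : X ⊆ N.E) (hA : A ⊆ X)
    (hI : N.Indep I) (hIX : I ⊆ X) :
    I.ncard ≤ (X \ A).ncard + {i ∈ Set.Icc 1 r | ∃ e ∈ A, e ∈ Y i}.ncard := by
  have hXfin : X.Finite := N.set_finite X hX
  have hIfin : I.Finite := hXfin.subset hIX
  obtain ⟨-, φ, hinj, hφ⟩ := (hpres.2 I).1 hI
  have h1 : (I ∩ A).ncard + (I \ A).ncard = I.ncard :=
    Set.ncard_inter_add_ncard_diff_eq_ncard I A hIfin
  have h2 : (I \ A).ncard ≤ (X \ A).ncard :=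
    Set.ncard_le_ncard (Set.diff_subset_diff_left hIX) hXfin.diff
  have h3 : (I ∩ A).ncard ≤ {i ∈ Set.Icc 1 r | ∃ e ∈ A, e ∈ Y i}.ncard := by
    refine Set.ncard_le_ncard_of_injOn φ (fun a ha => ?_) (hinj.mono Set.inter_subset_left) ?_
    · exact ⟨(hφ a ha.1).1, a, ha.2, (hφ a ha.1).2⟩
    · exact (Set.finite_Icc 1 r).subset (Set.sep_subset _ _)
  omega

/-- Defect Hall: a large partial transversal exists. -/
lemma hall_aux (N : Matroid α) [N.Finite] (r : ℕ) (Y : ℕ → Set α)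
    (hpres : IsPresentation N r Y) {F : Set α} (hF : F ⊆ N.E) (d : ℕ)
    (hd : ∀ A ⊆ F, A.ncard ≤ {i ∈ Set.Icc 1 r | ∃ e ∈ A, e ∈ Y i}.ncard + d) :
    ∃ J ⊆ F, N.Indep J ∧ F.ncard ≤ J.ncard + d := by
  classical
  have hFfin : F.Finite := N.set_finite F hF
  set D : Finset ℕ := Finset.Ioc r (r + d) with hD
  have hDcard : D.card = d := by simp [hD]
  set t : F → Finset ℕ :=
    fun e => ((Finset.Icc 1 r).filter (fun i => (e : α) ∈ Y i)) ∪ D with ht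
  have hall : ∀ s : Finset F, s.card ≤ (s.biUnion t).card := by
    intro s
    rcases s.eq_empty_or_nonempty with rfl | ⟨e0, he0⟩
    · simp
    set A : Set α := Subtype.val '' (↑s : Set F) with hAdef
    have hAF : A ⊆ F := by rintro x ⟨y, -, rfl⟩; exact y.2
    have hAcard : A.ncard = s.card := by
      rw [hAdef, Set.ncard_image_of_injOn (Subtype.val_injective.injOn),
        Set.ncard_coe_finset]
    have hsub : ((Finset.Icc 1 r).filter
        (fun i => ∃ e ∈ A, e ∈ Y i)) ∪ D ⊆ s.biUnion t := by
      intro i hi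
      rcases Finset.mem_union.1 hi with hi | hi
      · obtain ⟨hiIcc, e, heA, heY⟩ := by
          simpa using hi
        obtain ⟨y, hys, rfl⟩ := heA
        exact Finset.mem_biUnion.2 ⟨y, hys, Finset.mem_union_left _
          (Finset.mem_filter.2 ⟨by simpa using hiIcc, heY⟩)⟩
      · exact Finset.mem_biUnion.2 ⟨e0, he0, Finset.mem_union_right _ hi⟩
    have hdisj : Disjoint ((Finset.Icc 1 r).filter (fun i => ∃ e ∈ A, e ∈ Y i)) D := by
      refine Finset.disjoint_left.2 (fun i hi hi' => ?_)
      have h1 : i ≤ r := (Finset.mem_Icc.1 (Finset.mem_filter.1 hi).1).2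
      have h2 : r < i := (Finset.mem_Ioc.1 hi').1
      omega
    have hcardA : {i ∈ Set.Icc 1 r | ∃ e ∈ A, e ∈ Y i}.ncard
        = ((Finset.Icc 1 r).filter (fun i => ∃ e ∈ A, e ∈ Y i)).card := by
      rw [← Set.ncard_coe_finset]
      congr 1
      ext i
      simp [Set.mem_sep_iff]
    calc s.card = A.ncard := hAcard.symm
      _ ≤ {i ∈ Set.Icc 1 r | ∃ e ∈ A, e ∈ Y i}.ncard + d := hd A hAF
      _ = (((Finset.Icc 1 r).filter (fun i => ∃ e ∈ A, e ∈ Y i)) ∪ D).card := by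
          rw [Finset.card_union_of_disjoint hdisj, hcardA, hDcard]
      _ ≤ (s.biUnion t).card := Finset.card_le_card hsub
  obtain ⟨f, hfinj, hft⟩ := (Finset.all_card_le_biUnion_card_iff_exists_injective t).1 hall
  set J : Set α := {x | ∃ h : x ∈ F, f ⟨x, h⟩ ≤ r} with hJ
  have hJF : J ⊆ F := fun x hx => hx.1
  refine ⟨J, hJF, ?_, ?_⟩
  · refine (hpres.2 J).2 ⟨hJF.trans hF, fun x => if h : x ∈ F then f ⟨x, h⟩ else 0, ?_, ?_⟩
    · intro a ha b hb hab
      simp only [dif_pos ha.1, dif_pos hb.1] at hab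
      exact congrArg Subtype.val (hfinj hab)
    · rintro x ⟨hxF, hxr⟩
      simp only [dif_pos hxF]
      have := hft ⟨x, hxF⟩
      rw [ht] at this
      rcases Finset.mem_union.1 this with h | h
      · obtain ⟨h1, h2⟩ := Finset.mem_filter.1 h
        exact ⟨by simpa using h1, h2⟩
      · have := (Finset.mem_Ioc.1 h).1
        omega
  · have hsplit : (F \ J).ncard + J.ncard = F.ncard := by
      exact Set.ncard_diff_add_ncard_of_subset hJF hFfin
    have hFJ : (F \ J).ncard ≤ d := by
      rw [← hDcard, ← Set.ncard_coe_finset D]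
      refine Set.ncard_le_ncard_of_injOn
        (fun x => if h : x ∈ F then f ⟨x, h⟩ else 0) (fun a ha => ?_) ?_
        (D.finite_toSet)
      · obtain ⟨haF, haJ⟩ := ha
        simp only [dif_pos haF]
        have := hft ⟨a, haF⟩
        rw [ht] at this
        rcases Finset.mem_union.1 this with h | h
        · exfalso
          exact haJ ⟨haF, (Finset.mem_Icc.1 (Finset.mem_filter.1 h).1).2⟩
        · exact h
      · intro a ha b hb hab
        simp only [dif_pos ha.1, dif_pos hb.1] at hab
        exact congrArg Subtype.val (hfinj hab)
    omega

theorem statement11 (N : Matroid α) [N.Finite] (r : ℕ) (Y : ℕ → Set α)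
    (hpres : IsPresentation N r Y)
    (hsupp : ∀ e ∈ N.E, IsInterval {i ∈ Set.Icc 1 r | e ∈ Y i}) :
    (∀ C : Set α, IsCircuit N C →
      IsInterval {i ∈ Set.Icc 1 r | ∃ e ∈ C, e ∈ Y i}) ∧
    (∀ F : Set α, N.IsFlat F → 2 ≤ F.ncard → MatConnected (N ↾ F) →
      IsInterval {i ∈ Set.Icc 1 r | ∃ e ∈ F, e ∈ Y i} ∧
      F = {a ∈ N.E |
        {i ∈ Set.Icc 1 r | a ∈ Y i} ⊆ {i ∈ Set.Icc 1 r | ∃ e ∈ F, e ∈ Y i}}) := by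
  classical
  have part1 : ∀ C : Set α, IsCircuit N C →
      IsInterval {i ∈ Set.Icc 1 r | ∃ e ∈ C, e ∈ Y i} := by
    rintro C ⟨hCE, hCdep, hCmin⟩ x hx y hy z hxz hzy
    by_contra hzS
    obtain ⟨hxI, ex, hexC, hexY⟩ := hx
    obtain ⟨hyI, ey, heyC, heyY⟩ := hy
    have hzI : z ∈ Set.Icc 1 r := ⟨le_trans hxI.1 hxz, le_trans hzy hyI.2⟩
    have hno : ∀ e ∈ C, e ∉ Y z := by
      intro e he heY
      exact hzS ⟨hzI, e, he, heY⟩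
    set C₁ : Set α := {e ∈ C | ∀ i ∈ Set.Icc 1 r, e ∈ Y i → i < z} with hC₁
    set C₂ : Set α := C \ C₁ with hC₂
    have hC2high : ∀ e ∈ C₂, ∀ i ∈ Set.Icc 1 r, e ∈ Y i → z < i := by
      rintro e ⟨heC, heC₁⟩ i hiI hiY
      rcases lt_trichotomy i z with h | rfl | h
      · exfalso
        have hex : ∃ i0 ∈ Set.Icc 1 r, e ∈ Y i0 ∧ ¬ i0 < z := by
          by_contra hcon
          push_neg at hcon
          exact heC₁ ⟨heC, fun j hj hjY => hcon j hj hjY⟩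
        obtain ⟨i0, hi0I, hi0Y, hi0⟩ := hex
        have hz : z ∈ {j ∈ Set.Icc 1 r | e ∈ Y j} :=
          hsupp e (hCE heC) i ⟨hiI, hiY⟩ i0 ⟨hi0I, hi0Y⟩ z h.le (by omega)
        exact hno e heC hz.2
      · exact absurd hiY (hno e heC)
      · exact h
    have hexC₁ : ex ∈ C₁ := by
      refine ⟨hexC, fun i hiI hiY => ?_⟩
      by_contra h
      push_neg at h
      have hz : z ∈ {j ∈ Set.Icc 1 r | ex ∈ Y j} :=
        hsupp ex (hCE hexC) x ⟨hxI, hexY⟩ i ⟨hiI, hiY⟩ z hxz h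
      exact hno ex hexC hz.2
    have heyC₂ : ey ∈ C₂ := by
      refine ⟨heyC, fun h => ?_⟩
      have := h.2 y hyI heyY
      omega
    have hI₁ : N.Indep C₁ := by
      refine (hCmin ey heyC).subset (fun e he => ⟨he.1, ?_⟩)
      simp only [Set.mem_singleton_iff]
      rintro rfl
      exact heyC₂.2 he
    have hI₂ : N.Indep C₂ := by
      refine (hCmin ex hexC).subset (fun e he => ⟨he.1, ?_⟩)
      simp only [Set.mem_singleton_iff]
      rintro rfl
      exact he.2 hexC₁
    obtain ⟨-, φ₁, hinj₁, hφ₁⟩ := (hpres.2 C₁).1 hI₁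
    obtain ⟨-, φ₂, hinj₂, hφ₂⟩ := (hpres.2 C₂).1 hI₂
    have hlow : ∀ e ∈ C₁, φ₁ e < z := fun e he =>
      he.2 (φ₁ e) (hφ₁ e he).1 (hφ₁ e he).2
    have hhigh : ∀ e ∈ C₂, z < φ₂ e := fun e he =>
      hC2high e he (φ₂ e) (hφ₂ e he).1 (hφ₂ e he).2
    refine hCdep ((hpres.2 C).2 ⟨hCE, fun e => if e ∈ C₁ then φ₁ e else φ₂ e, ?_, ?_⟩)
    · intro a ha b hb hab
      by_cases hA : a ∈ C₁ <;> by_cases hB : b ∈ C₁ <;>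
        simp only [if_pos, if_neg, hA, hB, if_true, if_false] at hab
      · exact hinj₁ hA hB hab
      · have h1 := hlow a hA
        have h2 := hhigh b ⟨hb, hB⟩
        omega
      · have h1 := hlow b hB
        have h2 := hhigh a ⟨ha, hA⟩
        omega
      · exact hinj₂ ⟨ha, hA⟩ ⟨hb, hB⟩ hab
    · intro e he
      by_cases hA : e ∈ C₁
      · simpa [hA] using hφ₁ e hA
      · simpa [hA] using hφ₂ e ⟨he, hA⟩
  refine ⟨part1, fun F hFlat hcard hconn => ?_⟩
  have hFE : F ⊆ N.E := hFlat.subset_ground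
  have hFfin : F.Finite := N.set_finite F hFE
  -- circuits of the restriction are circuits of N
  have hcircN : ∀ C : Set α, IsCircuit (N ↾ F) C → IsCircuit N C ∧ C ⊆ F := by
    rintro C ⟨hCF, hCdep, hCmin⟩
    have hCF' : C ⊆ F := hCF
    refine ⟨⟨fun c hc => hFE (hCF' hc), fun h => hCdep (Matroid.restrict_indep_iff.2 ⟨h, hCF'⟩),
      fun c hc => (Matroid.restrict_indep_iff.1 (hCmin c hc)).1⟩, hCF'⟩
  have part2a : IsInterval {i ∈ Set.Icc 1 r | ∃ e ∈ F, e ∈ Y i} := by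
    rintro x ⟨hxI, ex, hexF, hexY⟩ y ⟨hyI, ey, heyF, heyY⟩ z hxz hzy
    by_cases hxy : ex = ey
    · subst hxy
      have hz := hsupp ex (hFE hexF) x ⟨hxI, hexY⟩ y ⟨hyI, heyY⟩ z hxz hzy
      exact ⟨hz.1, ex, hexF, hz.2⟩
    · obtain ⟨C, hC, h1, h2⟩ := hconn.2 (show ex ∈ (N ↾ F).E from hexF)
        (show ey ∈ (N ↾ F).E from heyF) hxy
      obtain ⟨hCN, hCF⟩ := hcircN C hC
      obtain ⟨hzI, g, hgC, hgY⟩ := part1 C hCN x ⟨hxI, ex, h1, hexY⟩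
        y ⟨hyI, ey, h2, heyY⟩ z hxz hzy
      exact ⟨hzI, g, hCF hgC, hgY⟩
  refine ⟨part2a, ?_⟩
  -- choose a maximizer A* of deficiency over subsets of F
  obtain ⟨A, hAF, hAmax⟩ := Set.exists_max_image {B | B ⊆ F}
    (fun B => (B.ncard : ℤ) - ({i ∈ Set.Icc 1 r | ∃ e ∈ B, e ∈ Y i}.ncard : ℤ))
    hFfin.finite_subsets ⟨∅, Set.empty_subset F⟩
  simp only [Set.mem_setOf_eq] at hAF hAmax
  have hge : {i ∈ Set.Icc 1 r | ∃ e ∈ A, e ∈ Y i}.ncard ≤ A.ncard := by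
    have h := hAmax ∅ (Set.empty_subset F)
    have h0 : {i ∈ Set.Icc 1 r | ∃ e ∈ (∅ : Set α), e ∈ Y i} = ∅ := by
      ext i; simp
    rw [h0] at h
    simp only [Set.ncard_empty, Nat.cast_zero, sub_zero, sub_self] at h
    omega
  set d : ℕ := A.ncard - {i ∈ Set.Icc 1 r | ∃ e ∈ A, e ∈ Y i}.ncard with hd
  have hdALL : ∀ B ⊆ F, B.ncard ≤ {i ∈ Set.Icc 1 r | ∃ e ∈ B, e ∈ Y i}.ncard + d := by
    intro B hB
    have := hAmax B hB
    omega
  obtain ⟨J, hJF, hJind, hJcard⟩ := hall_aux N r Y hpres hFE d hdALL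
  have hAcard : A.ncard ≤ F.ncard := Set.ncard_le_ncard hAF hFfin
  have hdiffA : (F \ A).ncard = F.ncard - A.ncard := Set.ncard_diff hAF (hFfin.subset hAF)
  have hJle : J.ncard ≤ (F \ A).ncard + {i ∈ Set.Icc 1 r | ∃ e ∈ A, e ∈ Y i}.ncard :=
    count_le N r Y hpres hFE hAF hJind hJF
  have hJcard' : J.ncard = F.ncard - d := by omega
  -- any basis of F has the same cardinality as a basis containing J
  obtain ⟨J₀, hJ₀b, hJJ₀⟩ := hJind.subset_isBasis_of_subset hJF hFE
  have hJ₀le : J₀.ncard ≤ (F \ A).ncard + {i ∈ Set.Icc 1 r | ∃ e ∈ A, e ∈ Y i}.ncard :=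
    count_le N r Y hpres hFE hAF hJ₀b.indep hJ₀b.subset
  have hJ₀ge : J.ncard ≤ J₀.ncard :=
    Set.ncard_le_ncard hJJ₀ (hFfin.subset hJ₀b.subset)
  have hJ₀card : J₀.ncard = F.ncard - d := by omega
  -- A = F, using connectivity
  have hAeq : A = F := by
    refine Set.eq_of_subset_of_ncard_le hAF ?_ hFfin
    by_contra hlt
    push_neg at hlt
    have hne : (F \ A).Nonempty := by
      rw [← Set.ncard_pos hFfin.diff]
      omega
    obtain ⟨e, heFA⟩ := hne
    obtain ⟨f, hfF, hfe⟩ := Set.exists_ne_of_one_lt_ncard (show 1 < F.ncard by omega) e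
    obtain ⟨C, hC, heC, hfC⟩ := hconn.2 (show e ∈ (N ↾ F).E from heFA.1)
      (show f ∈ (N ↾ F).E from hfF) (Ne.symm hfe)
    obtain ⟨hCN, hCF⟩ := hcircN C hC
    have hCe : N.Indep (C \ {e}) := hCN.2.2 e heC
    obtain ⟨J'', hJ''b, hsub⟩ := hCe.subset_isBasis_of_subset
      ((Set.diff_subset).trans hCF) hFE
    have hJ''card : J''.ncard = F.ncard - d := by
      have h1 : J''.encard = J₀.encard := hJ''b.encard_eq_encard hJ₀b
      have h2 : J''.ncard = J₀.ncard := by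
        rw [Set.ncard_def, Set.ncard_def, h1]
      omega
    by_cases heJ : e ∈ J''
    · have hCJ : C ⊆ J'' := by
        intro c hc
        by_cases hce : c = e
        · exact hce ▸ heJ
        · exact hsub ⟨hc, hce⟩
      exact hCN.2.1 (hJ''b.indep.subset hCJ)
    · have hJ''Fe : J'' ⊆ (F \ {e}) := fun c hc =>
        ⟨hJ''b.subset hc, fun h => heJ (h ▸ hc)⟩
      have hAFe : A ⊆ F \ {e} := fun c hc =>
        ⟨hAF hc, fun h =>
          heFA.2 (by rwa [Set.mem_singleton_iff.1 h] at hc)⟩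
      have hle := count_le N r Y hpres ((Set.diff_subset).trans hFE) hAFe
        hJ''b.indep hJ''Fe
      have hdiffe : ((F \ {e}) \ A).ncard = (F \ A).ncard - 1 := by
        have h1 : (F \ {e}) \ A = (F \ A) \ {e} := by
          ext c; simp; tauto
        rw [h1, Set.ncard_diff_singleton_of_mem heFA]
      have hpos : 1 ≤ (F \ A).ncard := by
        rw [Nat.one_le_iff_ne_zero, ← Nat.pos_iff_ne_zero, Set.ncard_pos hFfin.diff]
        exact ⟨e, heFA⟩
      omega
  -- now every basis of F has size |s(F)|, and we conclude
  subst hAeq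
  have hScard : J₀.ncard = {i ∈ Set.Icc 1 r | ∃ e ∈ A, e ∈ Y i}.ncard := by omega
  ext a
  simp only [Set.mem_setOf_eq]
  constructor
  · intro haF
    exact ⟨hFE haF, fun i hi => ⟨hi.1, a, haF, hi.2⟩⟩
  · rintro ⟨haE, hsa⟩
    by_cases haF : a ∈ A
    · exact haF
    · have haJ₀ : a ∉ J₀ := fun h => haF (hJ₀b.subset h)
      have hdep : ¬ N.Indep (insert a J₀) := by
        intro hind
        have hXE : insert a A ⊆ N.E := Set.insert_subset haE hFE
        have hle := count_le N r Y hpres hXE (subset_refl _) hind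
          (Set.insert_subset_insert hJ₀b.subset)
        have hSeq : {i ∈ Set.Icc 1 r | ∃ e ∈ insert a A, e ∈ Y i}
            = {i ∈ Set.Icc 1 r | ∃ e ∈ A, e ∈ Y i} := by
          ext i
          constructor
          · rintro ⟨hiI, e, he, heY⟩
            rcases he with rfl | he
            · exact hsa ⟨hiI, heY⟩
            · exact ⟨hiI, e, he, heY⟩
          · rintro ⟨hiI, e, he, heY⟩
            exact ⟨hiI, e, Set.mem_insert_of_mem a he, heY⟩
        rw [hSeq, Set.diff_self, Set.ncard_empty, zero_add] at hle
        rw [Set.ncard_insert_of_notMem haJ₀ (hFfin.subset hJ₀b.subset)] at hle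
        omega
      have hacl : a ∈ N.closure J₀ := by
        rw [hJ₀b.indep.mem_closure_iff_of_notMem haJ₀]
        exact ⟨fun h => hdep h, Set.insert_subset haE (hJ₀b.subset.trans hFE)⟩
      have : a ∈ N.closure A := (N.closure_subset_closure hJ₀b.subset) hacl
      rwa [hFlat.closure] at this

end Paper
end

section
/- If M is a fundamental transversal matroid, then every pair (X, Y) of cyclic flats of M is a modular pair. -/
open Set Matroid

namespace Paper

variable {α : Type*} {β : Type*}

lemma rnk_eq_of_spans (M : Matroid α) [M.Finite] {S Z : Set α}
    (hS : M.Indep S) (hSZ : S ⊆ Z) (hZ : Z ⊆ M.closure S) :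
    rnk M Z = S.ncard := by
  have hub : ∀ n ∈ {n | ∃ I, M.Indep I ∧ I ⊆ Z ∧ I.ncard = n}, n ≤ S.ncard := by
    rintro n ⟨I, hI, hIZ, rfl⟩
    by_contra hlt
    push_neg at hlt
    have hlt' : S.encard < I.encard := by
      rw [← hS.finite.cast_ncard_eq, ← hI.finite.cast_ncard_eq]
      exact_mod_cast hlt
    obtain ⟨x, hx, hins⟩ := hS.augment hI hlt'
    have hxcl : x ∈ M.closure S := hZ (hIZ hx.1)
    rw [hS.insert_indep_iff_of_notMem hx.2] at hins
    exact hins.2 hxcl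
  have hmem : S.ncard ∈ {n | ∃ I, M.Indep I ∧ I ⊆ Z ∧ I.ncard = n} := ⟨S, hS, hSZ, rfl⟩
  exact le_antisymm (csSup_le ⟨S.ncard, hmem⟩ hub) (le_csSup ⟨S.ncard, hub⟩ hmem)

theorem statement14 (M : Matroid α) [M.Finite] (h : IsFundamental M) :
    ∀ X Y : Set α, CyclicFlat M X → CyclicFlat M Y → ModularPair M X Y := by
  cases isEmpty_or_nonempty α with
  | inl hemp =>
      intro X Y _ _
      unfold ModularPair
      rw [Set.eq_empty_of_isEmpty X, Set.eq_empty_of_isEmpty Y]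
      simp
  | inr hne =>
  classical
  obtain ⟨r, A, ⟨hAE, hPres⟩, hfund⟩ := h
  choose! ε hε1 hε2 using hfund
  set B : Set α := ε '' (Set.Icc 1 r) with hBdef
  have hBfin : B.Finite := (Set.finite_Icc 1 r).image ε
  have hBE : B ⊆ M.E := by rintro _ ⟨i, hi, rfl⟩; exact hAE i hi (hε1 i hi)
  -- every subset of B is independent
  have hindB : ∀ S ⊆ B, M.Indep S := by
    intro S hSB
    rw [hPres]
    refine ⟨hSB.trans hBE, Function.invFunOn ε (Set.Icc 1 r), ?_, ?_⟩
    · intro y1 hy1 y2 hy2 heq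
      have h1 : ε (Function.invFunOn ε (Set.Icc 1 r) y1) = y1 :=
        Function.invFunOn_eq (by obtain ⟨i, hi, rfl⟩ := hSB hy1; exact ⟨i, hi, rfl⟩)
      have h2 : ε (Function.invFunOn ε (Set.Icc 1 r) y2) = y2 :=
        Function.invFunOn_eq (by obtain ⟨i, hi, rfl⟩ := hSB hy2; exact ⟨i, hi, rfl⟩)
      rw [← h1, ← h2, heq]
    · intro y hy
      have hex : ∃ a ∈ Set.Icc 1 r, ε a = y := by
        obtain ⟨i, hi, rfl⟩ := hSB hy; exact ⟨i, hi, rfl⟩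
      have hmem := Function.invFunOn_mem hex
      have heq := Function.invFunOn_eq hex
      refine ⟨hmem, ?_⟩
      have hA := hε1 _ hmem
      rwa [heq] at hA
  -- the index of a fundamental element is forced
  have hforced : ∀ (φ : α → ℕ) (I : Set α),
      (∀ x ∈ I, φ x ∈ Set.Icc 1 r ∧ x ∈ A (φ x)) →
      ∀ i ∈ Set.Icc 1 r, ε i ∈ I → φ (ε i) = i := by
    intro φ I hφ i hi hei
    obtain ⟨hmem, hA⟩ := hφ (ε i) hei
    by_contra hne
    exact hε2 i hi (φ (ε i)) hmem hne hA
  -- key lemma: fundamental elements of sets meeting a cyclic flat lie in the flat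
  have hkey : ∀ F, CyclicFlat M F → ∀ x ∈ F, ∀ j ∈ Set.Icc 1 r, x ∈ A j → ε j ∈ F := by
    intro F hF x hx j hj hxAj
    have hFE : F ⊆ M.E := hF.1.subset_ground
    have hnc := hF.2 x hx
    unfold IsColoop at hnc
    push_neg at hnc
    obtain ⟨B', hB'base, hxB'⟩ := hnc
    obtain ⟨hB'ind, hB'F⟩ := restrict_indep_iff.1 hB'base.indep
    have hxB'dep : ¬ M.Indep (insert x B') := by
      intro hind
      have hins : (M ↾ F).Indep (insert x B') :=
        restrict_indep_iff.2 ⟨hind, insert_subset hx hB'F⟩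
      have heq := hB'base.eq_of_subset_indep hins (subset_insert _ _)
      exact hxB' (heq ▸ mem_insert x B')
    by_contra hejF
    have hejB' : ε j ∉ B' := fun hmem => hejF (hB'F hmem)
    have hejE : ε j ∈ M.E := hAE j hj (hε1 j hj)
    by_cases hcase : M.Indep (insert (ε j) B')
    · obtain ⟨-, ψ, hψinj, hψ⟩ := (hPres _).1 hcase
      have hψej : ψ (ε j) = j := hforced ψ _ hψ j hj (mem_insert _ _)
      apply hxB'dep
      rw [hPres]
      refine ⟨insert_subset (hFE hx) (hB'F.trans hFE), Function.update ψ x j, ?_, ?_⟩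
      · intro y1 hy1 y2 hy2 heq
        by_cases h1 : y1 = x <;> by_cases h2 : y2 = x
        · rw [h1, h2]
        · exfalso
          rw [h1, Function.update_self, Function.update_of_ne h2] at heq
          have hy2B' : y2 ∈ B' := (mem_insert_iff.1 hy2).resolve_left h2
          have : y2 = ε j := hψinj (mem_insert_iff.2 (Or.inr hy2B')) (mem_insert _ _)
            (by rw [hψej, ← heq])
          exact hejB' (this ▸ hy2B')
        · exfalso
          rw [h2, Function.update_self, Function.update_of_ne h1] at heq
          have hy1B' : y1 ∈ B' := (mem_insert_iff.1 hy1).resolve_left h1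
          have : y1 = ε j := hψinj (mem_insert_iff.2 (Or.inr hy1B')) (mem_insert _ _)
            (by rw [hψej, heq])
          exact hejB' (this ▸ hy1B')
        · rw [Function.update_of_ne h1, Function.update_of_ne h2] at heq
          exact hψinj (mem_insert_iff.2 (Or.inr ((mem_insert_iff.1 hy1).resolve_left h1)))
            (mem_insert_iff.2 (Or.inr ((mem_insert_iff.1 hy2).resolve_left h2))) heq
      · intro y hy
        by_cases hyx : y = x
        · rw [hyx, Function.update_self]
          exact ⟨hj, hxAj⟩
        · rw [Function.update_of_ne hyx]
          exact hψ y (mem_insert_iff.2 (Or.inr ((mem_insert_iff.1 hy).resolve_left hyx)))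
    · rw [hB'ind.insert_indep_iff_of_notMem hejB'] at hcase
      have hcl : ε j ∈ M.closure B' := by
        by_contra hncl
        exact hcase ⟨hejE, hncl⟩
      have : ε j ∈ F := by
        have := M.closure_subset_closure hB'F hcl
        rwa [hF.1.closure] at this
      exact hejF this
  -- spanning lemma
  have hspan : ∀ Z, Z ⊆ M.E → (∀ x ∈ Z, ∀ j ∈ Set.Icc 1 r, x ∈ A j → ε j ∈ Z) →
      rnk M Z = (Z ∩ B).ncard := by
    intro Z hZE hP
    refine rnk_eq_of_spans M (hindB _ inter_subset_right) inter_subset_left ?_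
    intro x hx
    by_cases hxB : x ∈ B
    · exact M.subset_closure _ (inter_subset_left.trans hZE) ⟨hx, hxB⟩
    · by_contra hxcl
      have hxZB : x ∉ Z ∩ B := fun hmem => hxB hmem.2
      have hind : M.Indep (insert x (Z ∩ B)) := by
        rw [(hindB _ inter_subset_right).insert_indep_iff_of_notMem hxZB]
        exact ⟨hZE hx, hxcl⟩
      obtain ⟨-, φ, hφinj, hφ⟩ := (hPres _).1 hind
      obtain ⟨hjmem, hjA⟩ := hφ x (mem_insert _ _)
      have hejZ : ε (φ x) ∈ Z := hP x hx (φ x) hjmem hjA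
      have hejB : ε (φ x) ∈ B := mem_image_of_mem ε hjmem
      have hejI : ε (φ x) ∈ insert x (Z ∩ B) := mem_insert_iff.2 (Or.inr ⟨hejZ, hejB⟩)
      have hforce : φ (ε (φ x)) = φ x := hforced φ _ hφ (φ x) hjmem hejI
      have hne : ε (φ x) ≠ x := fun heq => hxB (heq ▸ hejB)
      exact hne (hφinj hejI (mem_insert _ _) hforce)
  intro X Y hX hY
  have hXE : X ⊆ M.E := hX.1.subset_ground
  have hYE : Y ⊆ M.E := hY.1.subset_ground
  have h1 : rnk M X = (X ∩ B).ncard := hspan X hXE (fun x hx j hj hA => hkey X hX x hx j hj hA)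
  have h2 : rnk M Y = (Y ∩ B).ncard := hspan Y hYE (fun x hx j hj hA => hkey Y hY x hx j hj hA)
  have h3 : rnk M (X ∪ Y) = ((X ∪ Y) ∩ B).ncard := by
    refine hspan _ (union_subset hXE hYE) ?_
    rintro x (hx | hx) j hj hA
    · exact Or.inl (hkey X hX x hx j hj hA)
    · exact Or.inr (hkey Y hY x hx j hj hA)
  have h4 : rnk M (X ∩ Y) = ((X ∩ Y) ∩ B).ncard := by
    refine hspan _ (inter_subset_left.trans hXE) ?_
    rintro x ⟨hx1, hx2⟩ j hj hA
    exact ⟨hkey X hX x hx1 j hj hA, hkey Y hY x hx2 j hj hA⟩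
  unfold ModularPair
  rw [h1, h2, h3, h4]
  have e1 : (X ∪ Y) ∩ B = (X ∩ B) ∪ (Y ∩ B) := union_inter_distrib_right X Y B
  have e2 : (X ∩ Y) ∩ B = (X ∩ B) ∩ (Y ∩ B) := by ext z; simp; tauto
  rw [e1, e2]
  exact (Set.ncard_union_add_ncard_inter _ _ (hBfin.subset inter_subset_right)
    (hBfin.subset inter_subset_right)).symm


end Paper
end
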